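/- arXiv:2010.13068 — 18 statements merged into one kernel-verified Lean document; each statement's English description precedes it below -/
import Mathlib

section
/- Let V be a real inner product space, let λ ∈ (0,1], let N be a positive integer, and let w^0, w^1, …, w^N ∈ V with w^0 = 0. Then Σ_{n=1}^N ⟨w^n, w^n − (1/2)λ w^{n-1}⟩ ≥ (1/2) Σ_{n=1}^N ‖w^n‖². -/
open scoped BigOperators

/-- Lemma 3.1, case k = 3,4: positivity property for the multiplier μ₁ = 1/2. -/
theorem stmt_1 (V : Type*) [NormedAddCommGroup V] [InnerProductSpace ℝ V]
    (l : ℝ) (hl : l ∈ Set.Ioc (0 : ℝ) 1) (N : ℕ) (hN : 0 < N)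
    (w : ℕ → V) (hw0 : w 0 = 0) :
    (1 / 2) * ∑ n ∈ Finset.Icc 1 N, ‖w n‖ ^ 2 ≤
      ∑ n ∈ Finset.Icc 1 N, (inner ℝ (w n) (w n - ((1 / 2) * l) • w (n - 1)) : ℝ) := by
  obtain ⟨hl0, hl1⟩ := hl
  rw [← Finset.Ico_add_one_right_eq_Icc, Finset.sum_Ico_eq_sum_range, Finset.sum_Ico_eq_sum_range]
  simp only [Nat.add_sub_cancel, Nat.add_sub_cancel_left]
  set S := ∑ i ∈ Finset.range N, ‖w (1 + i)‖ ^ 2 with hS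
  set T := ∑ i ∈ Finset.range N, ‖w i‖ ^ 2 with hT
  have hS0 : 0 ≤ S := Finset.sum_nonneg fun i _ => by positivity
  have hT0 : 0 ≤ T := Finset.sum_nonneg fun i _ => by positivity
  have hTS : T ≤ S := by
    have h1 := Finset.sum_range_sub (fun i => ‖w i‖ ^ 2) N
    have h2 : S - T = ‖w N‖ ^ 2 - ‖w 0‖ ^ 2 := by
      rw [hS, hT, ← Finset.sum_sub_distrib]
      rw [← h1]
      exact Finset.sum_congr rfl fun i _ => by rw [add_comm]
    rw [hw0] at h2
    simp at h2
    nlinarith [sq_nonneg ‖w N‖]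
  have key : ∀ i ∈ Finset.range N,
      ‖w (1 + i)‖ ^ 2 - (l / 4) * (‖w (1 + i)‖ ^ 2 + ‖w i‖ ^ 2) ≤
        (inner ℝ (w (1 + i)) (w (1 + i) - ((1 / 2 : ℝ) * l) • w i) : ℝ) := by
    intro i _
    rw [inner_sub_right, real_inner_smul_right, real_inner_self_eq_norm_sq]
    have h1 := real_inner_le_norm (w (1 + i)) (w i)
    nlinarith [sq_nonneg (‖w (1 + i)‖ - ‖w i‖), norm_nonneg (w (1 + i)), norm_nonneg (w i)]
  have hsum : ∑ i ∈ Finset.range N,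
      (‖w (1 + i)‖ ^ 2 - (l / 4) * (‖w (1 + i)‖ ^ 2 + ‖w i‖ ^ 2)) = S - (l / 4) * (S + T) := by
    rw [Finset.sum_sub_distrib, ← Finset.mul_sum, Finset.sum_add_distrib]
  calc (1 / 2) * S ≤ S - (l / 4) * (S + T) := by nlinarith
    _ = ∑ i ∈ Finset.range N,
        (‖w (1 + i)‖ ^ 2 - (l / 4) * (‖w (1 + i)‖ ^ 2 + ‖w i‖ ^ 2)) := hsum.symm
    _ ≤ _ := Finset.sum_le_sum key
end

section
/- Let V be a real inner product space, let λ ∈ (0,1], let N be a positive integer, and let w : ℤ → V satisfy w(n) = 0 for all n ≤ 0. Then Σ_{n=1}^N ⟨w(n), w(n) − λ w(n-1) + (1/4)λ² w(n-2)⟩ ≥ (1/4) Σ_{n=1}^N ‖w(n)‖². -/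
open scoped BigOperators

lemma key_ineq {V : Type*} [NormedAddCommGroup V] [InnerProductSpace ℝ V]
    (l : ℝ) (a b c : V) :
    (3/8)*‖a‖^2 + (1/2)*‖a - (l/2)•b‖^2 - (l^2/8)*‖b‖^2 - (l^2/2)*‖b - (l/2)•c‖^2
      ≤ (inner ℝ a (a - l•b + ((1/4)*l^2)•c) : ℝ) := by
  have hrw : a - l•b + ((1/4)*l^2)•c = (a - (l/2)•b) - (l/2)•(b - (l/2)•c) := by
    module
  rw [hrw]
  have h0 : (0:ℝ) ≤ ‖(1/2:ℝ)•a - l•(b - (l/2)•c)‖^2 := sq_nonneg _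
  have e1 : ∀ x y : V, ‖x - y‖^2 = ‖x‖^2 - 2*(inner ℝ x y : ℝ) + ‖y‖^2 :=
    fun x y => norm_sub_sq_real x y
  simp only [e1, inner_sub_right, inner_sub_left, real_inner_smul_right, real_inner_smul_left,
    norm_smul, Real.norm_eq_abs, mul_pow, sq_abs, real_inner_self_eq_norm_sq] at h0 ⊢
  nlinarith [sq_nonneg l]

lemma shift_le (h : ℤ → ℝ) (hpos : ∀ n, 0 ≤ h n) (h0 : h 0 = 0) (N : ℤ) (hN : 1 ≤ N) :
    ∑ n ∈ Finset.Icc (1:ℤ) N, h (n-1) ≤ ∑ n ∈ Finset.Icc (1:ℤ) N, h n := by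
  have e : ∑ n ∈ Finset.Icc (1:ℤ) N, h (n-1) = ∑ m ∈ Finset.Icc (0:ℤ) (N-1), h m := by
    apply Finset.sum_bij' (fun n _ => n - 1) (fun m _ => m + 1)
    all_goals intros; simp_all [Finset.mem_Icc]; try omega
  rw [e]
  have hins : Finset.Icc (0:ℤ) (N-1) = insert 0 (Finset.Icc 1 (N-1)) := by
    ext x; simp [Finset.mem_Icc]; omega
  rw [hins, Finset.sum_insert (by simp), h0, zero_add]
  apply Finset.sum_le_sum_of_subset_of_nonneg
  · apply Finset.Icc_subset_Icc_right; omega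
  · intro i _ _; exact hpos i

/-- Lemma 3.1, case k = 5: positivity property for the multipliers (μ₁, μ₂) = (1, −1/4). -/
theorem stmt_2 (V : Type*) [NormedAddCommGroup V] [InnerProductSpace ℝ V]
    (l : ℝ) (hl : l ∈ Set.Ioc (0 : ℝ) 1) (N : ℕ) (hN : 0 < N)
    (w : ℤ → V) (hw0 : ∀ n : ℤ, n ≤ 0 → w n = 0) :
    (1 / 4) * ∑ n ∈ Finset.Icc (1 : ℤ) (N : ℤ), ‖w n‖ ^ 2 ≤
      ∑ n ∈ Finset.Icc (1 : ℤ) (N : ℤ),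
        (inner ℝ (w n) (w n - l • w (n - 1) + ((1 / 4) * l ^ 2) • w (n - 2)) : ℝ) := by
  obtain ⟨hl0, hl1⟩ := hl
  set f : ℤ → ℝ := fun n => ‖w n‖^2 with hf
  set g : ℤ → ℝ := fun n => ‖w n - (l/2) • w (n-1)‖^2 with hg
  have hN1 : (1:ℤ) ≤ (N:ℤ) := by exact_mod_cast hN
  have hstep : ∀ n ∈ Finset.Icc (1:ℤ) (N:ℤ),
      (3/8)*f n + (1/2)*g n - (l^2/8)*f (n-1) - (l^2/2)*g (n-1)
        ≤ (inner ℝ (w n) (w n - l • w (n - 1) + ((1 / 4) * l ^ 2) • w (n - 2)) : ℝ) := by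
    intro n _
    have := key_ineq l (w n) (w (n-1)) (w (n-2))
    simp only [hf, hg]
    rw [show n - 1 - 1 = n - 2 from by ring]
    exact this
  have hsum := Finset.sum_le_sum hstep
  have hsplit : ∑ n ∈ Finset.Icc (1:ℤ) (N:ℤ),
      ((3/8)*f n + (1/2)*g n - (l^2/8)*f (n-1) - (l^2/2)*g (n-1))
      = (3/8) * ∑ n ∈ Finset.Icc (1:ℤ) (N:ℤ), f n
        + (1/2) * ∑ n ∈ Finset.Icc (1:ℤ) (N:ℤ), g n
        - (l^2/8) * ∑ n ∈ Finset.Icc (1:ℤ) (N:ℤ), f (n-1)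
        - (l^2/2) * ∑ n ∈ Finset.Icc (1:ℤ) (N:ℤ), g (n-1) := by
    simp [Finset.sum_add_distrib, Finset.sum_sub_distrib, Finset.mul_sum]
  rw [hsplit] at hsum
  have hfpos : ∀ n, 0 ≤ f n := fun n => sq_nonneg _
  have hgpos : ∀ n, 0 ≤ g n := fun n => sq_nonneg _
  have hf0 : f 0 = 0 := by simp [hf, hw0 0 le_rfl]
  have hg0 : g 0 = 0 := by simp [hg, hw0 0 le_rfl, hw0 (-1) (by norm_num)]
  have hsf := shift_le f hfpos hf0 (N:ℤ) hN1
  have hsg := shift_le g hgpos hg0 (N:ℤ) hN1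
  have hF : 0 ≤ ∑ n ∈ Finset.Icc (1:ℤ) (N:ℤ), f n := Finset.sum_nonneg fun i _ => hfpos i
  have hG : 0 ≤ ∑ n ∈ Finset.Icc (1:ℤ) (N:ℤ), g n := Finset.sum_nonneg fun i _ => hgpos i
  have hl2 : l^2 ≤ 1 := by nlinarith
  have hl2' : (0:ℝ) ≤ l^2 := sq_nonneg l
  nlinarith [mul_le_mul_of_nonneg_left hsf (by positivity : (0:ℝ) ≤ l^2/8),
    mul_le_mul_of_nonneg_left hsg (by positivity : (0:ℝ) ≤ l^2/2),
    mul_le_mul_of_nonneg_right hl2 hF, mul_le_mul_of_nonneg_right hl2 hG]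
end

section
/- Let V be a real inner product space, let λ ∈ (0,1], let N be a positive integer, and let w : ℤ → V satisfy w(n) = 0 for all n ≤ 0. Then Σ_{n=1}^N ⟨w(n), w(n) − (43/30)λ w(n-1) + (2/3)λ² w(n-2) − (1/10)λ³ w(n-3)⟩ ≥ (1/24) Σ_{n=1}^N ‖w(n)‖². -/
open scoped BigOperators

section Aux

variable {V : Type*} [NormedAddCommGroup V] [InnerProductSpace ℝ V]

lemma bdf6_sum_shift {N : ℕ} (h : ℤ → ℝ)
    (hsupp : ∀ m : ℤ, m ∉ Finset.Icc (1 : ℤ) (N : ℤ) → h m = 0)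
    (i : ℤ) (hi : 0 ≤ i) (hi3 : i ≤ 3) :
    ∑ n ∈ Finset.Icc (1 : ℤ) ((N : ℤ) + 3), h (n - i)
      = ∑ n ∈ Finset.Icc (1 : ℤ) ((N : ℤ) + 3), h n := by
  have key : ∀ a b : ℤ, a ≤ 1 → (N : ℤ) ≤ b →
      ∑ n ∈ Finset.Icc a b, h n = ∑ n ∈ Finset.Icc (1 : ℤ) (N : ℤ), h n := by
    intro a b ha hb
    symm
    apply Finset.sum_subset
    · intro x hx
      simp only [Finset.mem_Icc] at hx ⊢
      omega
    · intro x _ hx'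
      exact hsupp x hx'
  have hmap : ∑ n ∈ Finset.Icc (1 : ℤ) ((N : ℤ) + 3), h (n - i)
      = ∑ m ∈ Finset.Icc (1 - i) ((N : ℤ) + 3 - i), h m := by
    rw [show (1 - i : ℤ) = 1 + (-i) by ring, show ((N : ℤ) + 3 - i) = (N : ℤ) + 3 + (-i) by ring,
      ← Finset.map_add_right_Icc, Finset.sum_map]
    simp [sub_eq_add_neg]
  rw [hmap, key _ _ (by omega) (by omega), key 1 ((N : ℤ) + 3) le_rfl (by omega)]

/-- two elementary inner-product bounds -/
lemma bdf6_inner_le (x y : V) :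
    (inner ℝ x y : ℝ) ≤ ((inner ℝ x x : ℝ) + (inner ℝ y y : ℝ)) / 2 := by
  have h1 := real_inner_le_norm x y
  have h2 := sq_nonneg (‖x‖ - ‖y‖)
  rw [real_inner_self_eq_norm_sq, real_inner_self_eq_norm_sq]
  nlinarith

lemma bdf6_inner_ge (x y : V) :
    -(((inner ℝ x x : ℝ) + (inner ℝ y y : ℝ)) / 2) ≤ (inner ℝ x y : ℝ) := by
  have h1 := abs_real_inner_le_norm x y
  have h1' := (abs_le.mp h1).1
  have h2 := sq_nonneg (‖x‖ - ‖y‖)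
  rw [real_inner_self_eq_norm_sq, real_inner_self_eq_norm_sq]
  nlinarith

/-- Lemma A : the case λ = 1, via an (approximate) Fejér–Riesz factorization. -/
lemma bdf6_lemA (N : ℕ) (u : ℤ → V)
    (hu : ∀ n : ℤ, n ∉ Finset.Icc (1 : ℤ) (N : ℤ) → u n = 0) :
    0 ≤ (23 / 24) * (∑ n ∈ Finset.Icc (1 : ℤ) (N : ℤ), (inner ℝ (u n) (u n) : ℝ))
        - (43 / 30) * (∑ n ∈ Finset.Icc (1 : ℤ) (N : ℤ), (inner ℝ (u n) (u (n - 1)) : ℝ))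
        + (2 / 3) * (∑ n ∈ Finset.Icc (1 : ℤ) (N : ℤ), (inner ℝ (u n) (u (n - 2)) : ℝ))
        - (1 / 10) * (∑ n ∈ Finset.Icc (1 : ℤ) (N : ℤ), (inner ℝ (u n) (u (n - 3)) : ℝ)) := by
  -- extend all sums to S = Icc 1 (N+3)
  have ext : ∀ g : ℤ → V,
      (∑ n ∈ Finset.Icc (1 : ℤ) (N : ℤ), (inner ℝ (u n) (g n) : ℝ))
        = ∑ n ∈ Finset.Icc (1 : ℤ) ((N : ℤ) + 3), (inner ℝ (u n) (g n) : ℝ) := by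
    intro g
    apply Finset.sum_subset (Finset.Icc_subset_Icc_right (by omega))
    intro x _ hx'
    rw [hu x hx', inner_zero_left]
  rw [ext (fun n => u n), ext (fun n => u (n - 1)), ext (fun n => u (n - 2)),
    ext (fun n => u (n - 3))]
  set S := Finset.Icc (1 : ℤ) ((N : ℤ) + 3) with hS
  set A0 := ∑ n ∈ S, (inner ℝ (u n) (u n) : ℝ) with hA0
  set A1 := ∑ n ∈ S, (inner ℝ (u n) (u (n - 1)) : ℝ) with hA1
  set A2 := ∑ n ∈ S, (inner ℝ (u n) (u (n - 2)) : ℝ) with hA2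
  set A3 := ∑ n ∈ S, (inner ℝ (u n) (u (n - 3)) : ℝ) with hA3
  -- shifted sums
  have hsupp0 : ∀ m : ℤ, m ∉ Finset.Icc (1 : ℤ) (N : ℤ) → (inner ℝ (u m) (u m) : ℝ) = 0 := by
    intro m hm; rw [hu m hm, inner_zero_left]
  have hsupp : ∀ d : ℤ, ∀ m : ℤ, m ∉ Finset.Icc (1 : ℤ) (N : ℤ) →
      (inner ℝ (u m) (u (m - d)) : ℝ) = 0 := by
    intro d m hm; rw [hu m hm, inner_zero_left]
  have E11 : ∑ n ∈ S, (inner ℝ (u (n - 1)) (u (n - 1)) : ℝ) = A0 :=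
    bdf6_sum_shift (fun m => (inner ℝ (u m) (u m) : ℝ)) hsupp0 1 (by norm_num) (by norm_num)
  have E22 : ∑ n ∈ S, (inner ℝ (u (n - 2)) (u (n - 2)) : ℝ) = A0 :=
    bdf6_sum_shift (fun m => (inner ℝ (u m) (u m) : ℝ)) hsupp0 2 (by norm_num) (by norm_num)
  have E33 : ∑ n ∈ S, (inner ℝ (u (n - 3)) (u (n - 3)) : ℝ) = A0 :=
    bdf6_sum_shift (fun m => (inner ℝ (u m) (u m) : ℝ)) hsupp0 3 (by norm_num) (by norm_num)
  have E12 : ∑ n ∈ S, (inner ℝ (u (n - 1)) (u (n - 2)) : ℝ) = A1 := by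
    have h := bdf6_sum_shift (N := N) (fun m => (inner ℝ (u m) (u (m - 1)) : ℝ)) (hsupp 1) 1
      (by norm_num) (by norm_num)
    rw [hA1, hS, ← h]
    exact Finset.sum_congr rfl fun n _ => by rw [show n - 2 = n - 1 - 1 by ring]
  have E13 : ∑ n ∈ S, (inner ℝ (u (n - 1)) (u (n - 3)) : ℝ) = A2 := by
    have h := bdf6_sum_shift (N := N) (fun m => (inner ℝ (u m) (u (m - 2)) : ℝ)) (hsupp 2) 1
      (by norm_num) (by norm_num)
    rw [hA2, hS, ← h]
    exact Finset.sum_congr rfl fun n _ => by rw [show n - 3 = n - 1 - 2 by ring]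
  have E23 : ∑ n ∈ S, (inner ℝ (u (n - 2)) (u (n - 3)) : ℝ) = A1 := by
    have h := bdf6_sum_shift (N := N) (fun m => (inner ℝ (u m) (u (m - 1)) : ℝ)) (hsupp 1) 2
      (by norm_num) (by norm_num)
    rw [hA1, hS, ← h]
    exact Finset.sum_congr rfl fun n _ => by rw [show n - 3 = n - 2 - 1 by ring]
  -- the SOS part
  set v : ℤ → V := fun n =>
    (-10537 / 100000 : ℝ) • u n + (56156 / 100000 : ℝ) • u (n - 1)
      + (-63461 / 100000 : ℝ) • u (n - 2) + (47451 / 100000 : ℝ) • u (n - 3) with hv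
  have hvexp : ∀ n : ℤ, (inner ℝ (v n) (v n) : ℝ) =
      (-10537 / 100000 : ℝ) ^ 2 * (inner ℝ (u n) (u n) : ℝ)
      + (56156 / 100000 : ℝ) ^ 2 * (inner ℝ (u (n - 1)) (u (n - 1)) : ℝ)
      + (-63461 / 100000 : ℝ) ^ 2 * (inner ℝ (u (n - 2)) (u (n - 2)) : ℝ)
      + (47451 / 100000 : ℝ) ^ 2 * (inner ℝ (u (n - 3)) (u (n - 3)) : ℝ)
      + 2 * (-10537 / 100000 : ℝ) * (56156 / 100000 : ℝ) * (inner ℝ (u n) (u (n - 1)) : ℝ)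
      + 2 * (-10537 / 100000 : ℝ) * (-63461 / 100000 : ℝ) * (inner ℝ (u n) (u (n - 2)) : ℝ)
      + 2 * (-10537 / 100000 : ℝ) * (47451 / 100000 : ℝ) * (inner ℝ (u n) (u (n - 3)) : ℝ)
      + 2 * (56156 / 100000 : ℝ) * (-63461 / 100000 : ℝ) * (inner ℝ (u (n - 1)) (u (n - 2)) : ℝ)
      + 2 * (56156 / 100000 : ℝ) * (47451 / 100000 : ℝ) * (inner ℝ (u (n - 1)) (u (n - 3)) : ℝ)
      + 2 * (-63461 / 100000 : ℝ) * (47451 / 100000 : ℝ) * (inner ℝ (u (n - 2)) (u (n - 3)) : ℝ) := by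
    intro n
    simp only [hv, inner_add_left, inner_add_right, real_inner_smul_left, real_inner_smul_right]
    rw [real_inner_comm (u (n - 1)) (u n), real_inner_comm (u (n - 2)) (u n),
      real_inner_comm (u (n - 3)) (u n), real_inner_comm (u (n - 2)) (u (n - 1)),
      real_inner_comm (u (n - 3)) (u (n - 1)), real_inner_comm (u (n - 3)) (u (n - 2))]
    ring
  have hSOS : ∑ n ∈ S, (inner ℝ (v n) (v n) : ℝ)
      = (9543420627 / 10000000000 : ℝ) * A0 + (-7166719599 / 5000000000 : ℝ) * A1
        + (3333346913 / 5000000000 : ℝ) * A2 + (-499991187 / 5000000000 : ℝ) * A3 := by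
    rw [Finset.sum_congr rfl (fun n _ => hvexp n)]
    simp only [Finset.sum_add_distrib, ← Finset.mul_sum]
    rw [E11, E22, E33, E12, E13, E23, ← hA0, ← hA1, ← hA2, ← hA3]
    ring
  have hSOSpos : 0 ≤ ∑ n ∈ S, (inner ℝ (v n) (v n) : ℝ) :=
    Finset.sum_nonneg fun n _ => real_inner_self_nonneg
  -- bounds |A_d| ≤ A0
  have hA0pos : 0 ≤ A0 := Finset.sum_nonneg fun n _ => real_inner_self_nonneg
  have hup : ∀ (g : ℤ → V), (∑ n ∈ S, (inner ℝ (g n) (g n) : ℝ) = A0) →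
      (∑ n ∈ S, (inner ℝ (u n) (g n) : ℝ)) ≤ A0 ∧
      -A0 ≤ (∑ n ∈ S, (inner ℝ (u n) (g n) : ℝ)) := by
    intro g hg
    have hmean : ∑ n ∈ S, (((inner ℝ (u n) (u n) : ℝ) + (inner ℝ (g n) (g n) : ℝ)) / 2) = A0 := by
      rw [← Finset.sum_div, Finset.sum_add_distrib, hg, ← hA0]
      ring
    constructor
    · calc ∑ n ∈ S, (inner ℝ (u n) (g n) : ℝ)
          ≤ ∑ n ∈ S, (((inner ℝ (u n) (u n) : ℝ) + (inner ℝ (g n) (g n) : ℝ)) / 2) :=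
            Finset.sum_le_sum fun n _ => bdf6_inner_le (u n) (g n)
        _ = A0 := hmean
    · have h1 : ∑ n ∈ S, (-(((inner ℝ (u n) (u n) : ℝ) + (inner ℝ (g n) (g n) : ℝ)) / 2))
          ≤ ∑ n ∈ S, (inner ℝ (u n) (g n) : ℝ) :=
        Finset.sum_le_sum fun n _ => bdf6_inner_ge (u n) (g n)
      have h2 : ∑ n ∈ S, (-(((inner ℝ (u n) (u n) : ℝ) + (inner ℝ (g n) (g n) : ℝ)) / 2)) = -A0 := by
        rw [Finset.sum_neg_distrib, hmean]
      linarith [h1, h2]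
  obtain ⟨hb1, hb1'⟩ := hup (fun n => u (n - 1)) E11
  obtain ⟨hb2, hb2'⟩ := hup (fun n => u (n - 2)) E22
  obtain ⟨hb3, hb3'⟩ := hup (fun n => u (n - 3)) E33
  rw [← hA1] at hb1 hb1'
  rw [← hA2] at hb2 hb2'
  rw [← hA3] at hb3 hb3'
  linarith [hSOSpos, hSOS.symm.le, hSOS.le]

end Aux

noncomputable def bdf6f (l s : ℝ) (k n : ℤ) : ℝ :=
  if k = 1 then l ^ (n - 1) else if k ≤ n then s * l ^ (n - k) else 0

lemma bdf6f_one (l s : ℝ) (n : ℤ) : bdf6f l s 1 n = l ^ (n - 1) := by simp [bdf6f]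

lemma bdf6f_mid (l s : ℝ) {k n : ℤ} (h1 : k ≠ 1) (h2 : k ≤ n) :
    bdf6f l s k n = s * l ^ (n - k) := by simp [bdf6f, h1, h2]

lemma bdf6f_zero (l s : ℝ) {k n : ℤ} (h1 : k ≠ 1) (h2 : ¬ k ≤ n) :
    bdf6f l s k n = 0 := by simp [bdf6f, h1, h2]

lemma bdf6_key {l s : ℝ} (hl0 : 0 < l) (hs : s ^ 2 = 1 - l ^ 2) (N : ℕ) (hN : 0 < N) :
    ∀ m : ℤ, 1 ≤ m → ∀ n : ℤ, m ≤ n → n ≤ (N : ℤ) →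
      ∑ k ∈ Finset.Icc (1 : ℤ) (N : ℤ), bdf6f l s k n * bdf6f l s k m = l ^ (n - m) := by
  have hl0' : l ≠ 0 := ne_of_gt hl0
  have main : ∀ j : ℕ, ∀ n : ℤ, 1 + (j : ℤ) ≤ n → n ≤ (N : ℤ) →
      ∑ k ∈ Finset.Icc (1 : ℤ) (N : ℤ), bdf6f l s k n * bdf6f l s k (1 + (j : ℤ))
        = l ^ (n - (1 + (j : ℤ))) := by
    intro j
    induction j with
    | zero =>
      intro n h1n hnN
      simp only [Nat.cast_zero, add_zero]
      rw [Finset.sum_eq_single_of_mem 1 (by simp only [Finset.mem_Icc]; omega)]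
      · rw [bdf6f_one, bdf6f_one, show (1 : ℤ) - 1 = 0 by ring, zpow_zero, mul_one]
      · intro k hk hk1
        have hk' : ¬ k ≤ (1 : ℤ) := by
          simp only [Finset.mem_Icc] at hk; omega
        rw [bdf6f_zero l s hk1 hk', mul_zero]
    | succ j ih =>
      intro n hmn hnN
      set m : ℤ := 1 + (j : ℤ) with hm
      have hm1 : 1 ≤ m := by omega
      have hcast : 1 + ((j + 1 : ℕ) : ℤ) = m + 1 := by push_cast; ring
      rw [hcast]
      have hmn' : m + 1 ≤ n := by omega
      have hpt : ∀ k ∈ Finset.Icc (1 : ℤ) (N : ℤ),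
          bdf6f l s k n * bdf6f l s k (m + 1)
            = l * (bdf6f l s k n * bdf6f l s k m)
              + (if k = m + 1 then bdf6f l s k n * s else 0) := by
        intro k hk
        rcases eq_or_ne k 1 with h1 | h1
        · subst h1
          have hne : ¬ ((1 : ℤ) = m + 1) := by omega
          rw [if_neg hne, bdf6f_one, bdf6f_one, bdf6f_one,
            show m + 1 - 1 = m - 1 + 1 by ring, zpow_add_one₀ hl0']
          ring
        · by_cases h2 : k ≤ m
          · have h3 : k ≤ m + 1 := by omega
            have h4 : ¬ (k = m + 1) := by omega
            rw [if_neg h4, bdf6f_mid l s h1 h2, bdf6f_mid l s h1 h3,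
              show m + 1 - k = m - k + 1 by ring, zpow_add_one₀ hl0']
            ring
          · by_cases h3 : k = m + 1
            · subst h3
              rw [if_pos rfl, bdf6f_mid l s h1 (le_refl (m + 1)),
                bdf6f_zero l s h1 h2, show m + 1 - (m + 1) = 0 by ring, zpow_zero, mul_one]
              ring
            · have h4 : ¬ (k ≤ m + 1) := by omega
              rw [if_neg h3, bdf6f_zero l s h1 h4, bdf6f_zero l s h1 h2]
              ring
      rw [Finset.sum_congr rfl hpt, Finset.sum_add_distrib, ← Finset.mul_sum,
        ih n (by omega) hnN]
      have hmem : m + 1 ∈ Finset.Icc (1 : ℤ) (N : ℤ) := by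
        simp only [Finset.mem_Icc]; omega
      rw [Finset.sum_ite_eq' (Finset.Icc (1 : ℤ) (N : ℤ)) (m + 1)
        (fun k => bdf6f l s k n * s), if_pos hmem]
      rw [bdf6f_mid l s (show m + 1 ≠ 1 by omega) hmn']
      have e1 : l ^ (n - m) = l ^ (n - (m + 1)) * l := by
        rw [← zpow_add_one₀ hl0']
        congr 1
        ring
      rw [e1]
      linear_combination (l ^ (n - (m + 1))) * hs
  intro m hm n hmn hnN
  have : m = 1 + ((m - 1).toNat : ℤ) := by omega
  rw [this]
  exact main (m - 1).toNat n (by omega) hnN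

/-- Lemma 3.1, case k = 6: positivity property for the multipliers
(μ₁, μ₂, μ₃) = (43/30, −2/3, 1/10). -/
theorem stmt_3 (V : Type*) [NormedAddCommGroup V] [InnerProductSpace ℝ V]
    (l : ℝ) (hl : l ∈ Set.Ioc (0 : ℝ) 1) (N : ℕ) (hN : 0 < N)
    (w : ℤ → V) (hw0 : ∀ n : ℤ, n ≤ 0 → w n = 0) :
    (1 / 24) * ∑ n ∈ Finset.Icc (1 : ℤ) (N : ℤ), ‖w n‖ ^ 2 ≤
      ∑ n ∈ Finset.Icc (1 : ℤ) (N : ℤ),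
        (inner ℝ (w n)
          (w n - ((43 / 30) * l) • w (n - 1) + ((2 / 3) * l ^ 2) • w (n - 2)
            - ((1 / 10) * l ^ 3) • w (n - 3)) : ℝ) := by
  obtain ⟨hl0, hl1⟩ := hl
  set s : ℝ := Real.sqrt (1 - l ^ 2) with hsdef
  have hs : s ^ 2 = 1 - l ^ 2 := Real.sq_sqrt (by nlinarith)
  have key := bdf6_key hl0 hs N hN
  set u : ℤ → ℤ → V := fun k n =>
    if 1 ≤ n ∧ n ≤ (N : ℤ) then bdf6f l s k n • w n else 0 with hudef
  have hu_eq : ∀ k n : ℤ, n ≤ (N : ℤ) → u k n = bdf6f l s k n • w n := by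
    intro k n hn
    by_cases h1 : 1 ≤ n
    · simp only [hudef]
      rw [if_pos ⟨h1, hn⟩]
    · rw [hw0 n (by omega)]
      simp only [hudef]
      rw [if_neg (by omega), smul_zero]
  have husupp : ∀ k : ℤ, ∀ n : ℤ, n ∉ Finset.Icc (1 : ℤ) (N : ℤ) → u k n = 0 := by
    intro k n hn
    rw [Finset.mem_Icc] at hn
    simp only [hudef]
    rw [if_neg hn]
  have hgen : ∀ d : ℕ,
      ∑ n ∈ Finset.Icc (1 : ℤ) (N : ℤ), l ^ d * (inner ℝ (w n) (w (n - (d : ℤ))) : ℝ)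
        = ∑ k ∈ Finset.Icc (1 : ℤ) (N : ℤ), ∑ n ∈ Finset.Icc (1 : ℤ) (N : ℤ),
            (inner ℝ (u k n) (u k (n - (d : ℤ))) : ℝ) := by
    intro d
    rw [Finset.sum_comm]
    apply Finset.sum_congr rfl
    intro n hn
    rw [Finset.mem_Icc] at hn
    by_cases hd : 1 ≤ n - (d : ℤ)
    · have e : ∀ k : ℤ, (inner ℝ (u k n) (u k (n - (d : ℤ))) : ℝ)
          = (bdf6f l s k n * bdf6f l s k (n - (d : ℤ))) * (inner ℝ (w n) (w (n - (d : ℤ))) : ℝ) := by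
        intro k
        rw [hu_eq k n hn.2, hu_eq k (n - (d : ℤ)) (by omega),
          real_inner_smul_left, real_inner_smul_right]
        ring
      rw [Finset.sum_congr rfl (fun k _ => e k), ← Finset.sum_mul,
        key (n - (d : ℤ)) hd n (by omega) hn.2]
      congr 1
      rw [show n - (n - (d : ℤ)) = (d : ℤ) by ring, zpow_natCast]
    · rw [hw0 (n - (d : ℤ)) (by omega)]
      have hz : ∀ k : ℤ, u k (n - (d : ℤ)) = 0 := by
        intro k
        simp only [hudef]
        rw [if_neg (by omega)]
      simp [hz]
  have hg0 := hgen 0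
  have hg1 := hgen 1
  have hg2 := hgen 2
  have hg3 := hgen 3
  simp only [Nat.cast_zero, sub_zero, pow_zero, one_mul] at hg0
  simp only [Nat.cast_one, pow_one] at hg1
  simp only [Nat.cast_ofNat] at hg2 hg3
  simp only [← Finset.mul_sum] at hg1 hg2 hg3
  have hnormsum : ∑ n ∈ Finset.Icc (1 : ℤ) (N : ℤ), ‖w n‖ ^ 2
      = ∑ n ∈ Finset.Icc (1 : ℤ) (N : ℤ), (inner ℝ (w n) (w n) : ℝ) :=
    Finset.sum_congr rfl fun n _ => (real_inner_self_eq_norm_sq (w n)).symm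
  have hexp : ∀ n : ℤ, (inner ℝ (w n)
        (w n - ((43 / 30) * l) • w (n - 1) + ((2 / 3) * l ^ 2) • w (n - 2)
          - ((1 / 10) * l ^ 3) • w (n - 3)) : ℝ)
      = (inner ℝ (w n) (w n) : ℝ)
        - (43 / 30) * (l * (inner ℝ (w n) (w (n - 1)) : ℝ))
        + (2 / 3) * (l ^ 2 * (inner ℝ (w n) (w (n - 2)) : ℝ))
        - (1 / 10) * (l ^ 3 * (inner ℝ (w n) (w (n - 3)) : ℝ)) := by
    intro n
    simp only [inner_sub_right, inner_add_right, real_inner_smul_right]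
    ring
  have hrhs : ∑ n ∈ Finset.Icc (1 : ℤ) (N : ℤ),
        (inner ℝ (w n)
          (w n - ((43 / 30) * l) • w (n - 1) + ((2 / 3) * l ^ 2) • w (n - 2)
            - ((1 / 10) * l ^ 3) • w (n - 3)) : ℝ)
      = (∑ n ∈ Finset.Icc (1 : ℤ) (N : ℤ), (inner ℝ (w n) (w n) : ℝ))
        - (43 / 30) * (l * ∑ n ∈ Finset.Icc (1 : ℤ) (N : ℤ), (inner ℝ (w n) (w (n - 1)) : ℝ))
        + (2 / 3) * (l ^ 2 * ∑ n ∈ Finset.Icc (1 : ℤ) (N : ℤ), (inner ℝ (w n) (w (n - 2)) : ℝ))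
        - (1 / 10) * (l ^ 3 * ∑ n ∈ Finset.Icc (1 : ℤ) (N : ℤ), (inner ℝ (w n) (w (n - 3)) : ℝ)) := by
    rw [Finset.sum_congr rfl fun n _ => hexp n]
    simp only [Finset.sum_add_distrib, Finset.sum_sub_distrib, ← Finset.mul_sum]
  have hsum : 0 ≤ (23 / 24) * (∑ k ∈ Finset.Icc (1 : ℤ) (N : ℤ),
          ∑ n ∈ Finset.Icc (1 : ℤ) (N : ℤ), (inner ℝ (u k n) (u k n) : ℝ))
        - (43 / 30) * (∑ k ∈ Finset.Icc (1 : ℤ) (N : ℤ),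
          ∑ n ∈ Finset.Icc (1 : ℤ) (N : ℤ), (inner ℝ (u k n) (u k (n - 1)) : ℝ))
        + (2 / 3) * (∑ k ∈ Finset.Icc (1 : ℤ) (N : ℤ),
          ∑ n ∈ Finset.Icc (1 : ℤ) (N : ℤ), (inner ℝ (u k n) (u k (n - 2)) : ℝ))
        - (1 / 10) * (∑ k ∈ Finset.Icc (1 : ℤ) (N : ℤ),
          ∑ n ∈ Finset.Icc (1 : ℤ) (N : ℤ), (inner ℝ (u k n) (u k (n - 3)) : ℝ)) := by
    have h := Finset.sum_nonneg
      (fun k (_ : k ∈ Finset.Icc (1 : ℤ) (N : ℤ)) => bdf6_lemA N (u k) (husupp k))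
    simpa only [Finset.sum_add_distrib, Finset.sum_sub_distrib, ← Finset.mul_sum] using h
  rw [hnormsum, hrhs]
  linarith [hsum, hg0, hg1, hg2, hg3]
end

section
/- Let α ∈ (0,1). For every z ∈ ℂ with |z| ≤ 1, one has Re( (11/6 − 3z + (3/2)z² − (1/3)z³)^α / (1 − (1/2)z) ) ≥ 0, where w^α denotes the principal branch of the complex power. -/
set_option maxHeartbeats 1000000 in
open Complex Real in
/-- Lemma 4.1: A-stability of the pair (g, μ) for BDF3. -/
theorem stmt_4 (α : ℝ) (hα : α ∈ Set.Ioo (0 : ℝ) 1) (z : ℂ) (hz : ‖z‖ ≤ 1) :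
    0 ≤ (((11 / 6 - 3 * z + (3 / 2) * z ^ 2 - (1 / 3) * z ^ 3) ^ (α : ℂ)) /
          (1 - (1 / 2) * z)).re := by
  obtain ⟨hα0, hα1⟩ := hα
  set w : ℂ := 11 / 6 - 3 * z + (3 / 2) * z ^ 2 - (1 / 3) * z ^ 3 with hw
  set m : ℂ := 1 - (1 / 2) * z with hm
  -- basic facts about z
  have hxre : |z.re| ≤ 1 := le_trans (Complex.abs_re_le_norm z) hz
  have hxy : z.re ^ 2 + z.im ^ 2 ≤ 1 := by
    have h1 : ‖z‖ ^ 2 ≤ 1 := by nlinarith [norm_nonneg z]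
    rw [Complex.sq_norm, Complex.normSq_apply] at h1
    nlinarith
  -- m has positive real part
  have hmre : (1:ℝ)/2 ≤ m.re := by
    have hh : m.re = 1 - (1/2) * z.re := by
      rw [hm]
      simp [Complex.sub_re, Complex.mul_re]
      try ring
    rw [hh]
    cases abs_le.mp hxre with
    | intro h1 h2 => linarith
  have hm0 : m ≠ 0 := by
    intro h
    rw [h] at hmre
    simp at hmre
    linarith
  by_cases hw0 : w = 0
  · rw [hw0, Complex.zero_cpow (by exact_mod_cast ne_of_gt hα0 : (α:ℂ) ≠ 0), zero_div]
    simp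
  · -- key polynomial inequality: Re(w * conj m) ≥ 0
    have hA : 0 ≤ w.re * m.re + w.im * m.im := by
      have hre : w.re * m.re + w.im * m.im =
          11/6 - 47/12*z.re + 3*z.re^2 - 13/12*z.re^3 + 1/6*z.re^4
            + 1/4*z.re*z.im^2 - 1/6*z.im^4 := by
        have h : z = (z.re : ℂ) + z.im * I := (Complex.re_add_im z).symm
        rw [hw, hm, h]
        simp [Complex.mul_re, Complex.mul_im, pow_succ]
        ring
      rw [hre]
      nlinarith [sq_nonneg (1-z.re), sq_nonneg z.im, sq_nonneg (z.re*z.im),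
        sq_nonneg (1-z.re^2-z.im^2), sq_nonneg ((1-z.re)*z.im), sq_nonneg (z.im^2),
        mul_nonneg (sq_nonneg z.im) (sq_nonneg (1-z.re))]
    have hwabs : 0 < ‖w‖ := by
      exact norm_pos_iff.mpr hw0
    have hmabs : 0 < ‖m‖ := by
      exact norm_pos_iff.mpr hm0
    set θ := Complex.arg w with hθdef
    set φ := Complex.arg m with hφdef
    have hφ : |φ| < π/2 := Complex.abs_arg_lt_pi_div_two_iff.mpr (Or.inl (by linarith))
    have hθpi : |θ| ≤ π := Complex.abs_arg_le_pi w
    -- cos(θ - φ) ≥ 0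
    have hcos1 : 0 ≤ Real.cos (θ - φ) := by
      have e1 := Complex.norm_mul_cos_arg w
      have e2 := Complex.norm_mul_sin_arg w
      have e3 := Complex.norm_mul_cos_arg m
      have e4 := Complex.norm_mul_sin_arg m
      rw [← hθdef] at e1 e2; rw [← hφdef] at e3 e4
      rw [← e1, ← e2, ← e3, ← e4] at hA
      rw [Real.cos_sub]
      nlinarith [hA, mul_pos hwabs hmabs]
    -- |θ - φ| ≤ π/2
    have hθφ : |θ - φ| ≤ π/2 := by
      by_contra h
      push_neg at h
      have hlt : |θ - φ| < π + π/2 := by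
        cases abs_le.mp hθpi with
        | intro h1 h2 =>
          cases abs_lt.mp hφ with
          | intro h3 h4 =>
            rw [abs_lt]; constructor <;> linarith
      have : Real.cos |θ - φ| < 0 :=
        Real.cos_neg_of_pi_div_two_lt_of_lt h hlt
      rw [Real.cos_abs] at this
      linarith
    -- |α θ - φ| ≤ π/2
    have hkey : |α * θ - φ| ≤ π/2 := by
      have h1 := abs_le.mp hθφ
      have h2 := abs_lt.mp hφ
      have hπ : 0 < π := Real.pi_pos
      rw [abs_le]
      constructor <;> nlinarith [h1.1, h1.2, h2.1, h2.2]
    have hcos2 : 0 ≤ Real.cos (α * θ - φ) := by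
      have h := abs_le.mp hkey
      apply Real.cos_nonneg_of_mem_Icc
      rw [Set.mem_Icc]
      exact ⟨by linarith [h.1], by linarith [h.2]⟩
    -- compute re and im of w ^ α
    have l1 : (Complex.log w * (α:ℂ)).re = Real.log (‖w‖) * α := by
      rw [Complex.mul_re, Complex.log_re]
      simp
    have l2 : (Complex.log w * (α:ℂ)).im = α * θ := by
      rw [Complex.mul_im, Complex.log_re, Complex.log_im, ← hθdef]
      simp [mul_comm]
    have hre : (w ^ (α:ℂ)).re = ‖w‖ ^ α * Real.cos (α * θ) := by
      rw [Complex.cpow_def_of_ne_zero hw0, Complex.exp_re, l1, l2,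
        Real.rpow_def_of_pos hwabs]
    have him : (w ^ (α:ℂ)).im = ‖w‖ ^ α * Real.sin (α * θ) := by
      rw [Complex.cpow_def_of_ne_zero hw0, Complex.exp_im, l1, l2,
        Real.rpow_def_of_pos hwabs]
    -- conclude
    rw [Complex.div_re, ← add_div]
    apply div_nonneg _ (Complex.normSq_nonneg m)
    have e3 := Complex.norm_mul_cos_arg m
    have e4 := Complex.norm_mul_sin_arg m
    rw [← hφdef] at e3 e4
    rw [hre, him, ← e3, ← e4]
    have : ‖w‖ ^ α * Real.cos (α * θ) * (‖m‖ * Real.cos φ) +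
        ‖w‖ ^ α * Real.sin (α * θ) * (‖m‖ * Real.sin φ)
        = ‖w‖ ^ α * ‖m‖ * Real.cos (α * θ - φ) := by
      rw [Real.cos_sub]; ring
    rw [this]
    positivity
end

section
/- Let α ∈ (0,1). For every z ∈ ℂ with |z| ≤ 1, one has Re( (25/12 − 4z + 3z² − (4/3)z³ + (1/4)z⁴)^α / (1 − (1/2)z) ) ≥ 0, where w^α denotes the principal branch of the complex power. -/
open Complex Metric

noncomputable def gB (z : ℂ) : ℂ := 25 / 12 - 4 * z + 3 * z ^ 2 - (4 / 3) * z ^ 3 + (1 / 4) * z ^ 4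
noncomputable def muB (z : ℂ) : ℂ := 1 - (1 / 2) * z

lemma gB_diff : Differentiable ℂ gB := by unfold gB; fun_prop

lemma muB_re (z : ℂ) (hz : ‖z‖ ≤ 1) : (1:ℝ)/2 ≤ (muB z).re := by
  have h1 : |z.re| ≤ 1 := (Complex.abs_re_le_norm z).trans hz
  have : (muB z).re = 1 - z.re / 2 := by
    simp [muB, Complex.sub_re, Complex.mul_re]
    ring
  rw [this]
  cases' abs_le.1 h1 with h2 h3
  linarith

lemma muB_ne (z : ℂ) (hz : ‖z‖ ≤ 1) : muB z ≠ 0 := by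
  intro h
  have := muB_re z hz
  rw [h] at this
  simp at this
  linarith

lemma boundaryB (z : ℂ) (h : ‖z‖ = 1) : 0 ≤ (gB z * (starRingEnd ℂ) (muB z)).re := by
  have hn : z.re ^ 2 + z.im ^ 2 = 1 := by
    have := Complex.sq_norm z
    rw [h] at this
    simpa [Complex.normSq_apply, sq] using this.symm
  have hx1 : z.re ≤ 1 := by nlinarith [sq_nonneg z.im]
  set x := z.re
  set y := z.im
  have key : (gB z * (starRingEnd ℂ) (muB z)).re
      = (1 - x) * (-2*x^3 + (23/6)*x^2 - (3/2)*x + 2/3) := by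
    simp only [gB, muB, Complex.mul_re, Complex.mul_im, Complex.sub_re, Complex.sub_im,
      Complex.add_re, Complex.add_im, Complex.one_re, Complex.one_im, pow_succ, pow_zero, one_mul,
      Complex.conj_re, Complex.conj_im]
    norm_num
    linear_combination ((3/8)*x*y^2 - (5/12)*y^2 - (1/8)*x^3 - (13/12)*x^2 + (23/8)*x - 17/12) * hn
  rw [key]
  nlinarith [sq_nonneg (x - 1/4), sq_nonneg (x-1), sq_nonneg (x+1),
    mul_nonneg (sub_nonneg.2 hx1) (sq_nonneg (x-1/4))]

lemma div_re_of_mul_conj {a b : ℂ} (h : 0 ≤ (a * (starRingEnd ℂ) b).re) : 0 ≤ (a / b).re := by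
  rw [Complex.div_re]
  have h2 : (a * (starRingEnd ℂ) b).re = a.re * b.re + a.im * b.im := by
    simp [Complex.mul_re, Complex.conj_re, Complex.conj_im]
  rw [h2] at h
  have h3 := Complex.normSq_nonneg b
  rw [← add_div]
  exact div_nonneg h h3

lemma interiorB (z : ℂ) (hz : ‖z‖ ≤ 1) : 0 ≤ (gB z / muB z).re := by
  have hdiffOn : DifferentiableOn ℂ (fun w => Complex.exp (-(gB w / muB w)))
      (closedBall (0:ℂ) 1) := by
    apply DifferentiableOn.cexp
    apply DifferentiableOn.neg
    apply DifferentiableOn.div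
    · exact gB_diff.differentiableOn
    · exact (Differentiable.differentiableOn (by unfold muB; fun_prop))
    · intro w hw
      exact muB_ne w (by simpa [Complex.dist_eq] using mem_closedBall.1 hw)
  have hderiv : DiffContOnCl ℂ (fun w => Complex.exp (-(gB w / muB w))) (ball (0:ℂ) 1) := by
    apply DifferentiableOn.diffContOnCl
    rwa [closure_ball (0:ℂ) one_ne_zero]
  have hbound : ∀ w ∈ frontier (ball (0:ℂ) 1), ‖Complex.exp (-(gB w / muB w))‖ ≤ 1 := by
    intro w hw
    rw [frontier_ball (0:ℂ) one_ne_zero] at hw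
    have habs : ‖w‖ = 1 := by simpa [Complex.dist_eq] using hw
    have h0 : 0 ≤ (gB w / muB w).re := div_re_of_mul_conj (boundaryB w habs)
    rw [Complex.norm_exp]
    simp only [Complex.neg_re]
    exact Real.exp_le_one_iff.2 (by linarith)
  have hzc : z ∈ closure (ball (0:ℂ) 1) := by
    rw [closure_ball (0:ℂ) one_ne_zero]
    simpa [Complex.dist_eq] using hz
  have hle := Complex.norm_le_of_forall_mem_frontier_norm_le isBounded_ball hderiv hbound hzc
  rw [Complex.norm_exp] at hle
  simp only [Complex.neg_re] at hle
  have := Real.exp_le_one_iff.1 hle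
  linarith

/-- Lemma 4.2: A-stability of the pair (g, μ) for BDF4. -/
theorem stmt_5 (α : ℝ) (hα : α ∈ Set.Ioo (0 : ℝ) 1) (z : ℂ) (hz : ‖z‖ ≤ 1) :
    0 ≤ (((25 / 12 - 4 * z + 3 * z ^ 2 - (4 / 3) * z ^ 3 + (1 / 4) * z ^ 4) ^ (α : ℂ)) /
          (1 - (1 / 2) * z)).re := by
  obtain ⟨hα0, hα1⟩ := hα
  show 0 ≤ ((gB z) ^ (α:ℂ) / muB z).re
  by_cases hg0 : gB z = 0
  · rw [hg0, Complex.zero_cpow (by exact_mod_cast ne_of_gt hα0), zero_div]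
    simp
  have hμ : muB z ≠ 0 := muB_ne z hz
  set θ := Complex.arg (gB z) with hθdef
  set ψ := Complex.arg (muB z) with hψdef
  have hψ : |ψ| < Real.pi / 2 :=
    Complex.abs_arg_lt_pi_div_two_iff.2 (Or.inl (by linarith [muB_re z hz]))
  have hθpi : |θ| ≤ Real.pi := Complex.abs_arg_le_pi (gB z)
  have habsg : 0 < ‖gB z‖ := norm_pos_iff.mpr hg0
  have habsμ : 0 < ‖muB z‖ := norm_pos_iff.mpr hμ
  have hnsq : 0 < Complex.normSq (muB z) := Complex.normSq_pos.2 hμ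
  have hdiv : (gB z / muB z).re
      = ‖gB z‖ * ‖muB z‖ * Real.cos (θ - ψ) / Complex.normSq (muB z) := by
    rw [Complex.div_re, ← add_div, Real.cos_sub,
      ← Complex.norm_mul_cos_arg (gB z), ← Complex.norm_mul_sin_arg (gB z),
      ← Complex.norm_mul_cos_arg (muB z), ← Complex.norm_mul_sin_arg (muB z)]
    rw [hθdef, hψdef]
    ring_nf
  have hcosθψ : 0 ≤ Real.cos (θ - ψ) := by
    by_contra hc
    push_neg at hc
    have h1 := interiorB z hz
    rw [hdiv] at h1
    have h2 : ‖gB z‖ * ‖muB z‖ * Real.cos (θ - ψ) < 0 :=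
      mul_neg_of_pos_of_neg (mul_pos habsg habsμ) hc
    have := div_neg_of_neg_of_pos h2 hnsq
    linarith
  have hθψ : |θ - ψ| ≤ Real.pi / 2 := by
    by_contra hc
    push_neg at hc
    obtain ⟨hθ1, hθ2⟩ := abs_le.1 hθpi
    obtain ⟨hψ1, hψ2⟩ := abs_lt.1 hψ
    rcases abs_cases (θ - ψ) with ⟨he, hpos⟩ | ⟨he, hneg⟩
    · rw [he] at hc
      have := Real.cos_neg_of_pi_div_two_lt_of_lt hc (by linarith)
      linarith
    · rw [he] at hc
      have := Real.cos_neg_of_pi_div_two_lt_of_lt hc (by linarith)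
      rw [neg_sub, ← Real.cos_neg, neg_sub] at this
      linarith
  have hpi2 : (0:ℝ) < Real.pi / 2 := by positivity
  have htarget : |α * θ - ψ| ≤ Real.pi / 2 := by
    obtain ⟨h1, h2⟩ := abs_le.1 hθψ
    obtain ⟨h3, h4⟩ := abs_le.1 hψ.le
    rw [abs_le]
    constructor <;> nlinarith
  have hcos : 0 ≤ Real.cos (α * θ - ψ) :=
    Real.cos_nonneg_of_mem_Icc (abs_le.1 htarget |> fun ⟨a, b⟩ => ⟨a, b⟩)
  have hre : ((gB z) ^ (α:ℂ) / muB z).re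
      = Real.exp (Real.log (‖gB z‖) * α) * ‖muB z‖
          * Real.cos (α * θ - ψ) / Complex.normSq (muB z) := by
    rw [Complex.cpow_def_of_ne_zero hg0, Complex.div_re, ← add_div,
      Complex.exp_re, Complex.exp_im]
    rw [show (Complex.log (gB z) * (α:ℂ)).re = Real.log (‖gB z‖) * α by
      simp [Complex.mul_re, Complex.log_re]]
    rw [show (Complex.log (gB z) * (α:ℂ)).im = θ * α by
      simp [Complex.mul_im, Complex.log_im, hθdef]]
    rw [Real.cos_sub, ← Complex.norm_mul_cos_arg (muB z), ← Complex.norm_mul_sin_arg (muB z)]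
    rw [hψdef]
    ring_nf
  rw [hre]
  have h0 : (0:ℝ) ≤ Real.exp (Real.log (‖gB z‖) * α) := (Real.exp_pos _).le
  exact div_nonneg (mul_nonneg (mul_nonneg h0 habsμ.le) hcos) hnsq.le
end

section
/- Let α ∈ (0,1). For every z ∈ ℂ with |z| ≤ 1, one has Re( (137/60 − 5z + 5z² − (10/3)z³ + (5/4)z⁴ − (1/5)z⁵)^α / (1 − (1/2)z)² ) ≥ 0, where w^α denotes the principal branch of the complex power. -/
open Complex


/-- membership in the closed disc gives a real inequality -/
lemma aux_disc (z : ℂ) (hz : ‖z‖ ≤ 1) : z.re ^ 2 + z.im ^ 2 ≤ 1 := by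
  have h1 := Complex.sq_norm z
  have h2 := Complex.normSq_apply z
  have h0 := norm_nonneg z
  nlinarith

/-- denominator is nonzero on the closed disc -/
lemma aux_den_ne (z : ℂ) (hz : ‖z‖ ≤ 1) : (1 - (1/2) * z) ≠ 0 := by
  intro h
  have hz2 : z = 2 := by linear_combination (-2 : ℂ) * h
  rw [hz2] at hz
  norm_num at hz

/-- real part of the denominator is positive on the closed disc -/
lemma aux_mu_re_pos (z : ℂ) (hz : ‖z‖ ≤ 1) : 0 < ((1 - (1/2) * z) ^ 2).re := by
  have hd := aux_disc z hz
  set x := z.re with hx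
  set y := z.im with hy
  have hz2 : z = (x:ℂ) + y * I := (re_add_im z).symm
  have hre : ((1 - (1/2) * z) ^ 2).re = 1 - x + (1/4) * x^2 - (1/4) * y^2 := by
    rw [hz2]; simp [pow_succ, Complex.mul_re, Complex.mul_im]; ring
  rw [hre]
  nlinarith [sq_nonneg (x - 1)]

/-- the boundary inequality: Re (g z * conj (mu z)) >= 0 expressed in coordinates -/
lemma aux_P_nonneg (x y : ℝ) (h : x ^ 2 + y ^ 2 = 1) :
    0 ≤ (137/60 - 5*y^2 + (5/4)*y^4 - 5*x + 10*x*y^2 - x*y^4 + 5*x^2 - (15/2)*x^2*y^2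
      - (10/3)*x^3 + 2*x^3*y^2 + (5/4)*x^4 - (1/5)*x^5) * (1 - x + (1/4) * x^2 - (1/4) * y^2)
      + (-5*y + (10/3)*y^3 - (1/5)*y^5 + 10*x*y - 5*x*y^3 - 10*x^2*y + 2*x^2*y^3 + 5*x^3*y - x^4*y)
        * (-y + (1/2)*x*y) := by
  have key : (137/60 - 5*y^2 + (5/4)*y^4 - 5*x + 10*x*y^2 - x*y^4 + 5*x^2 - (15/2)*x^2*y^2
      - (10/3)*x^3 + 2*x^3*y^2 + (5/4)*x^4 - (1/5)*x^5) * (1 - x + (1/4) * x^2 - (1/4) * y^2)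
      + (-5*y + (10/3)*y^3 - (1/5)*y^5 + 10*x*y - 5*x*y^3 - 10*x^2*y + 2*x^2*y^3 + 5*x^3*y - x^4*y)
        * (-y + (1/2)*x*y)
      = (1 - x) * (23/30 - (7/10)*x + (92/15)*x^2 - (42/5)*x^3 + (16/5)*x^4)
        + (x^2 + y^2 - 1) *
          (-91/60 + (349/60)*x - (1261/240)*x^2 + (13/15)*x^3 + (41/80)*x^4 - (1/20)*x^5
            + (-227/240 + (31/15)*x - (6/5)*x^2 + (1/10)*x^3) * y^2
            + (-9/80 + (3/20)*x) * y^4) := by ring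
  rw [key, h]
  have hx1 : x ≤ 1 := by nlinarith
  have hq : 0 < 23/30 - (7/10)*x + (92/15)*x^2 - (42/5)*x^3 + (16/5)*x^4 := by
    nlinarith [sq_nonneg (x^2 - (21/16)*x), sq_nonneg (x - 84/149)]
  nlinarith


/-- boundary: Re(g/mu) >= 0 when |z| = 1 -/
lemma aux_bd (z : ℂ) (h1 : ‖z‖ = 1) :
    0 ≤ ((137 / 60 - 5 * z + 5 * z ^ 2 - (10 / 3) * z ^ 3 + (5 / 4) * z ^ 4 - (1 / 5) * z ^ 5)
          / (1 - (1/2) * z) ^ 2).re := by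
  rw [Complex.div_re, ← add_div]
  apply div_nonneg _ (Complex.normSq_nonneg _)
  set x := z.re with hx
  set y := z.im with hy
  have hz2 : z = (x:ℂ) + y * I := (re_add_im z).symm
  have hxy : x ^ 2 + y ^ 2 = 1 := by
    have := Complex.sq_norm z
    rw [h1, Complex.normSq_apply] at this
    nlinarith
  have hgre : (137 / 60 - 5 * z + 5 * z ^ 2 - (10 / 3) * z ^ 3 + (5 / 4) * z ^ 4 - (1 / 5) * z ^ 5).re
      = 137/60 - 5*y^2 + (5/4)*y^4 - 5*x + 10*x*y^2 - x*y^4 + 5*x^2 - (15/2)*x^2*y^2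
      - (10/3)*x^3 + 2*x^3*y^2 + (5/4)*x^4 - (1/5)*x^5 := by
    rw [hz2]; simp [pow_succ, Complex.mul_re, Complex.mul_im]; ring
  have hgim : (137 / 60 - 5 * z + 5 * z ^ 2 - (10 / 3) * z ^ 3 + (5 / 4) * z ^ 4 - (1 / 5) * z ^ 5).im
      = -5*y + (10/3)*y^3 - (1/5)*y^5 + 10*x*y - 5*x*y^3 - 10*x^2*y + 2*x^2*y^3 + 5*x^3*y - x^4*y := by
    rw [hz2]; simp [pow_succ, Complex.mul_re, Complex.mul_im]; ring
  have hmre : ((1 - (1/2) * z) ^ 2).re = 1 - x + (1/4) * x^2 - (1/4) * y^2 := by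
    rw [hz2]; simp [pow_succ, Complex.mul_re, Complex.mul_im]; ring
  have hmim : ((1 - (1/2) * z) ^ 2).im = -y + (1/2)*x*y := by
    rw [hz2]; simp [pow_succ, Complex.mul_re, Complex.mul_im]; ring
  rw [hgre, hgim, hmre, hmim]
  exact aux_P_nonneg x y hxy

/-- interior via maximum modulus: Re(g/mu) >= 0 on the closed disc -/
lemma aux_key (z : ℂ) (hz : ‖z‖ ≤ 1) :
    0 ≤ ((137 / 60 - 5 * z + 5 * z ^ 2 - (10 / 3) * z ^ 3 + (5 / 4) * z ^ 4 - (1 / 5) * z ^ 5)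
          / (1 - (1/2) * z) ^ 2).re := by
  set f : ℂ → ℂ := fun w =>
    Complex.exp (-((137 / 60 - 5 * w + 5 * w ^ 2 - (10 / 3) * w ^ 3 + (5 / 4) * w ^ 4 - (1 / 5) * w ^ 5)
          / (1 - (1/2) * w) ^ 2)) with hf
  have hUb : Bornology.IsBounded (Metric.ball (0:ℂ) 1) := Metric.isBounded_ball
  have hdiff : DiffContOnCl ℂ f (Metric.ball (0:ℂ) 1) := by
    apply DifferentiableOn.diffContOnCl
    rw [closure_ball (0:ℂ) one_ne_zero]
    intro w hw
    have hw1 : ‖w‖ ≤ 1 := by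
      simpa [Complex.dist_eq] using Metric.mem_closedBall.mp hw
    have hden : ((1 - (1/2) * w) ^ 2) ≠ 0 := pow_ne_zero 2 (aux_den_ne w hw1)
    apply DifferentiableAt.differentiableWithinAt
    apply DifferentiableAt.cexp
    apply DifferentiableAt.neg
    exact DifferentiableAt.div (by fun_prop) (by fun_prop) hden
  have hbd : ∀ w ∈ frontier (Metric.ball (0:ℂ) 1), ‖f w‖ ≤ 1 := by
    intro w hw
    rw [frontier_ball (0:ℂ) one_ne_zero] at hw
    have hw1 : ‖w‖ = 1 := by
      simpa [Complex.dist_eq] using hw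
    rw [hf]
    simp only [Complex.norm_exp]
    rw [Real.exp_le_one_iff]
    simp only [Complex.neg_re, neg_nonpos]
    exact aux_bd w hw1
  have hzc : z ∈ closure (Metric.ball (0:ℂ) 1) := by
    rw [closure_ball (0:ℂ) one_ne_zero]
    simpa [Complex.dist_eq] using hz
  have := norm_le_of_forall_mem_frontier_norm_le hUb hdiff hbd hzc
  rw [hf] at this
  simp only [Complex.norm_exp, Real.exp_le_one_iff, Complex.neg_re,
    neg_nonpos] at this
  exact this


/-- Lemma 4.3: A-stability of the pair (g, μ) for BDF5. -/
theorem stmt_6 (α : ℝ) (hα : α ∈ Set.Ioo (0 : ℝ) 1) (z : ℂ) (hz : ‖z‖ ≤ 1) :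
    0 ≤ (((137 / 60 - 5 * z + 5 * z ^ 2 - (10 / 3) * z ^ 3 + (5 / 4) * z ^ 4
            - (1 / 5) * z ^ 5) ^ (α : ℂ)) / (1 - (1 / 2) * z) ^ 2).re := by
  obtain ⟨hα0, hα1⟩ := hα
  set g : ℂ := 137 / 60 - 5 * z + 5 * z ^ 2 - (10 / 3) * z ^ 3 + (5 / 4) * z ^ 4 - (1 / 5) * z ^ 5
    with hgdef
  set μ : ℂ := (1 - (1 / 2) * z) ^ 2 with hμdef
  have hμ : μ ≠ 0 := pow_ne_zero 2 (aux_den_ne z hz)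
  have hμre : 0 < μ.re := aux_mu_re_pos z hz
  by_cases hg : g = 0
  · rw [hg, Complex.zero_cpow (by exact_mod_cast hα0.ne'), zero_div]
    simp
  -- abbreviations
  set A := Complex.arg g with hA
  set M := Complex.arg μ with hM
  have habsg : 0 < ‖g‖ := norm_pos_iff.mpr hg
  have habsμ : 0 < ‖μ‖ := norm_pos_iff.mpr hμ
  have hNμ : 0 < Complex.normSq μ := Complex.normSq_pos.mpr hμ
  -- |M| < π/2
  have hMlt : |M| < Real.pi / 2 := Complex.abs_arg_lt_pi_div_two_iff.mpr (Or.inl hμre)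
  have hApi : |A| ≤ Real.pi := Complex.abs_arg_le_pi g
  -- cos(A - M) ≥ 0
  have hkey := aux_key z hz
  rw [← hgdef, ← hμdef] at hkey
  rw [Complex.div_re, ← add_div] at hkey
  have hnum : 0 ≤ g.re * μ.re + g.im * μ.im := by
    rw [le_div_iff₀ hNμ, zero_mul] at hkey; exact hkey
  have hgre : g.re = ‖g‖ * Real.cos A := by
    rw [Complex.cos_arg hg]; field_simp
  have hgim : g.im = ‖g‖ * Real.sin A := by
    rw [Complex.sin_arg]; field_simp
  have hμre' : μ.re = ‖μ‖ * Real.cos M := by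
    rw [Complex.cos_arg hμ]; field_simp
  have hμim' : μ.im = ‖μ‖ * Real.sin M := by
    rw [Complex.sin_arg]; field_simp
  have hcosAM : 0 ≤ Real.cos (A - M) := by
    rw [hgre, hgim, hμre', hμim'] at hnum
    have h2 : 0 ≤ ‖g‖ * ‖μ‖ * Real.cos (A - M) := by
      rw [Real.cos_sub]; nlinarith
    nlinarith [mul_pos habsg habsμ]
  -- |A - M| ≤ π/2
  have hAMle : |A - M| ≤ Real.pi / 2 := by
    by_contra hcon
    push_neg at hcon
    have hub : |A - M| < Real.pi + Real.pi / 2 := by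
      have := abs_sub A M
      linarith
    have := Real.cos_neg_of_pi_div_two_lt_of_lt hcon hub
    rw [Real.cos_abs] at this
    linarith
  -- |A*α - M| ≤ π/2
  have hfin : |A * α - M| ≤ Real.pi / 2 := by
    have hdecomp : A * α - M = α * (A - M) + (α - 1) * M := by ring
    have h1 : |A * α - M| ≤ α * |A - M| + (1 - α) * |M| := by
      rw [hdecomp]
      calc |α * (A - M) + (α - 1) * M| ≤ |α * (A - M)| + |(α - 1) * M| := abs_add_le _ _
        _ = α * |A - M| + (1 - α) * |M| := by
            rw [abs_mul, abs_mul, abs_of_pos hα0, abs_of_neg (by linarith : α - 1 < 0)]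
            ring
    nlinarith [abs_nonneg (A - M), abs_nonneg M]
  have hcosfin : 0 ≤ Real.cos (A * α - M) := by
    apply Real.cos_nonneg_of_mem_Icc
    constructor
    · linarith [abs_le.mp hfin |>.1]
    · linarith [abs_le.mp hfin |>.2]
  -- now compute the real part
  rw [Complex.cpow_def_of_ne_zero hg, Complex.div_re]
  have hre1 : (Complex.log g * (α:ℂ)).re = Real.log (‖g‖) * α := by
    simp [Complex.mul_re, Complex.log_re, Complex.log_im]
  have him1 : (Complex.log g * (α:ℂ)).im = A * α := by
    simp [Complex.mul_im, Complex.log_re, Complex.log_im, hA]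
  rw [Complex.exp_re, Complex.exp_im, hre1, him1, hμre', hμim']
  have hcomb : Real.exp (Real.log (‖g‖) * α) * Real.cos (A * α) * (‖μ‖ * Real.cos M) / Complex.normSq μ
      + Real.exp (Real.log (‖g‖) * α) * Real.sin (A * α) * (‖μ‖ * Real.sin M) / Complex.normSq μ
      = (Real.exp (Real.log (‖g‖) * α) * ‖μ‖ / Complex.normSq μ)
        * Real.cos (A * α - M) := by
    rw [Real.cos_sub]; field_simp
  rw [hcomb]
  positivity
end

section
/- Let α ∈ (0,1). For every z ∈ ℂ with |z| ≤ 1, one has Re( (147/60 − 6z + (15/2)z² − (20/3)z³ + (15/4)z⁴ − (6/5)z⁵ + (1/6)z⁶)^α / ((1 − (3/5)z)(1 − (1/2)z)(1 − (1/3)z)) ) ≥ 0, where w^α denotes the principal branch of the complex power. -/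
set_option maxHeartbeats 1000000

open Complex

/-- The BDF6 generating polynomial. -/
noncomputable def gB6 (z : ℂ) : ℂ := 147 / 60 - 6 * z + (15 / 2) * z ^ 2 - (20 / 3) * z ^ 3
    + (15 / 4) * z ^ 4 - (6 / 5) * z ^ 5 + (1 / 6) * z ^ 6

/-- The multiplier polynomial. -/
noncomputable def muB6 (z : ℂ) : ℂ :=
    (1 - (3 / 5) * z) * (1 - (1 / 2) * z) * (1 - (1 / 3) * z)

lemma sq_add_sq_le_one {z : ℂ} (hz : ‖z‖ ≤ 1) : z.re ^ 2 + z.im ^ 2 ≤ 1 := by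
  have h1 : ‖z‖ ^ 2 ≤ 1 := by
    nlinarith [norm_nonneg z]
  rwa [Complex.sq_norm, Complex.normSq_apply, ← pow_two, ← pow_two] at h1

lemma muB6_re_pos {z : ℂ} (hz : ‖z‖ ≤ 1) : 0 < (muB6 z).re := by
  have hxy := sq_add_sq_le_one hz
  set x := z.re with hx
  set y := z.im with hy
  have h1 : -1 ≤ x := by nlinarith [sq_nonneg y]
  have h2 : x ≤ 1 := by nlinarith [sq_nonneg y]
  have hre : (muB6 z).re = 1 - 43/30*x + 2/3*(x^2 - y^2) - 1/10*(x^3 - 3*x*y^2) := by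
    simp [Complex.mul_re, Complex.mul_im, Complex.div_re, Complex.div_im,
      Complex.normSq_apply, muB6]
    ring
  rw [hre]
  nlinarith [sq_nonneg y, sq_nonneg (x-1), sq_nonneg (x+1),
    mul_nonneg (sub_nonneg.2 h2) (sq_nonneg y), sq_nonneg (x - 0.57),
    mul_nonneg (sub_nonneg.2 h2) (sq_nonneg (x-0.57)),
    mul_nonneg (by linarith : (0:ℝ) ≤ x+1) (sq_nonneg (x-0.57))]

lemma muB6_ne_zero {z : ℂ} (hz : ‖z‖ ≤ 1) : muB6 z ≠ 0 := by
  intro h0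
  have := muB6_re_pos hz
  rw [h0] at this
  simp at this

lemma key_identity (z : ℂ) : (gB6 z).re * (muB6 z).re + (gB6 z).im * (muB6 z).im
    = (1 - z.re) * ((2/9) + (188/75) * z.re + (1052/225) * z.re^2 + (-474/25) * z.re^3
        + (796/45) * z.re^4 + (-16/3) * z.re^5)
    + ((-401/180) + (-61/36) * z.im^2 + (-13/45) * z.im^4 + (-2/225) * z.im^6
        + (21233/1800) * z.re + (523/90) * z.re * z.im^2 + (317/360) * z.re * z.im^4
        + (1/20) * z.re * z.im^6 + (-16013/900) * z.re^2 + (-524/75) * z.re^2 * z.im^2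
        + (-152/225) * z.re^2 * z.im^4 + (442/45) * z.re^3 + (589/180) * z.re^3 * z.im^2
        + (1/12) * z.re^3 * z.im^4 + (-11/225) * z.re^4 + (-98/225) * z.re^4 * z.im^2
        + (-103/72) * z.re^5 + (1/60) * z.re^5 * z.im^2 + (52/225) * z.re^6
        + (-1/60) * z.re^7) * (z.re^2 + z.im^2 - 1) := by
  simp [gB6, muB6, Complex.mul_re, Complex.mul_im, Complex.div_re, Complex.div_im,
    Complex.normSq_apply, pow_succ]
  ring

lemma boundary_nonneg {z : ℂ} (hz : ‖z‖ = 1) : 0 ≤ (gB6 z / muB6 z).re := by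
  have hz' : ‖z‖ ≤ 1 := hz.le
  have hxy : z.re ^ 2 + z.im ^ 2 = 1 := by
    have : ‖z‖ ^ 2 = 1 := by rw [hz]; norm_num
    rwa [Complex.sq_norm, Complex.normSq_apply, ← pow_two, ← pow_two] at this
  set x := z.re with hx
  set y := z.im with hy
  have h1 : -1 ≤ x := by nlinarith [sq_nonneg y]
  have h2 : x ≤ 1 := by nlinarith [sq_nonneg y]
  have hq : 0 ≤ (2/9) + (188/75) * x + (1052/225) * x^2 + (-474/25) * x^3
      + (796/45) * x^4 + (-16/3) * x^5 := by
    nlinarith [sq_nonneg (x + 0.136), sq_nonneg (x - 1), sq_nonneg (x+1), sq_nonneg x,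
      mul_nonneg (sub_nonneg.2 h2) (sq_nonneg (x+0.136)),
      mul_nonneg (by linarith : (0:ℝ) ≤ x + 1) (sq_nonneg (x+0.136)),
      sq_nonneg (x^2 - x), sq_nonneg (x^2+x),
      mul_nonneg (mul_nonneg (sub_nonneg.2 h2) (by linarith : (0:ℝ) ≤ x+1))
        (sq_nonneg (x+0.136))]
  have hN : 0 ≤ (gB6 z).re * (muB6 z).re + (gB6 z).im * (muB6 z).im := by
    rw [key_identity z, ← hx, ← hy, hxy]
    have h3 : 0 ≤ 1 - x := by linarith
    nlinarith [mul_nonneg h3 hq]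
  rw [Complex.div_re, ← add_div]
  exact div_nonneg hN (Complex.normSq_nonneg _)

lemma disk_nonneg {z : ℂ} (hz : ‖z‖ ≤ 1) : 0 ≤ (gB6 z / muB6 z).re := by
  have hgd : Differentiable ℂ gB6 := by unfold gB6; fun_prop
  have hmd : Differentiable ℂ muB6 := by unfold muB6; fun_prop
  have hd : DifferentiableOn ℂ (fun w => Complex.exp (-(gB6 w / muB6 w)))
      (Metric.closedBall (0:ℂ) 1) := by
    apply DifferentiableOn.cexp
    apply DifferentiableOn.neg
    apply DifferentiableOn.div hgd.differentiableOn hmd.differentiableOn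
    intro w hw
    exact muB6_ne_zero (by simpa [Complex.dist_eq] using Metric.mem_closedBall.mp hw)
  have hdc : DiffContOnCl ℂ (fun w => Complex.exp (-(gB6 w / muB6 w))) (Metric.ball 0 1) :=
    ⟨hd.mono Metric.ball_subset_closedBall, by
      rw [closure_ball (0:ℂ) one_ne_zero]; exact hd.continuousOn⟩
  have hbound : ∀ w ∈ frontier (Metric.ball (0:ℂ) 1),
      ‖Complex.exp (-(gB6 w / muB6 w))‖ ≤ 1 := by
    intro w hw
    rw [frontier_ball (0:ℂ) one_ne_zero] at hw
    have hw1 : ‖w‖ = 1 := by simpa [Complex.dist_eq] using hw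
    rw [Complex.norm_exp]
    rw [Real.exp_le_one_iff]
    have := boundary_nonneg hw1
    simp only [Complex.neg_re]
    linarith
  have hmem : z ∈ closure (Metric.ball (0:ℂ) 1) := by
    rw [closure_ball (0:ℂ) one_ne_zero]
    simpa [Complex.dist_eq] using hz
  have hle := Complex.norm_le_of_forall_mem_frontier_norm_le Metric.isBounded_ball hdc hbound hmem
  rw [Complex.norm_exp, Real.exp_le_one_iff, Complex.neg_re] at hle
  linarith

/-- Lemma 4.4: A-stability of the pair (g, μ) for BDF6. -/
theorem stmt_7 (α : ℝ) (hα : α ∈ Set.Ioo (0 : ℝ) 1) (z : ℂ) (hz : ‖z‖ ≤ 1) :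
    0 ≤ (((147 / 60 - 6 * z + (15 / 2) * z ^ 2 - (20 / 3) * z ^ 3 + (15 / 4) * z ^ 4
            - (6 / 5) * z ^ 5 + (1 / 6) * z ^ 6) ^ (α : ℂ)) /
          ((1 - (3 / 5) * z) * (1 - (1 / 2) * z) * (1 - (1 / 3) * z))).re := by
  obtain ⟨hα0, hα1⟩ := hα
  show 0 ≤ ((gB6 z) ^ (α : ℂ) / muB6 z).re
  have hvre : 0 < (muB6 z).re := muB6_re_pos hz
  have hv : muB6 z ≠ 0 := muB6_ne_zero hz
  have hdisk : 0 ≤ (gB6 z / muB6 z).re := disk_nonneg hz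
  by_cases hw : gB6 z = 0
  · rw [hw, Complex.zero_cpow (by exact_mod_cast hα0.ne' : (α : ℂ) ≠ 0), zero_div]
    simp
  · set T := (gB6 z).arg with hT
    set m := (muB6 z).arg with hm
    have hmlt : |m| < Real.pi / 2 := Complex.abs_arg_lt_pi_div_two_iff.mpr (Or.inl hvre)
    have hqle : |(gB6 z / muB6 z).arg| ≤ Real.pi / 2 := Complex.abs_arg_le_pi_div_two_iff.mpr hdisk
    have hTle : |T| ≤ Real.pi := Complex.abs_arg_le_pi _
    have hpi : (0:ℝ) < Real.pi := Real.pi_pos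
    -- arg of quotient equals T - m (no wrap-around)
    have hangle : ((gB6 z / muB6 z).arg : Real.Angle) = ((T - m : ℝ) : Real.Angle) := by
      rw [Complex.arg_div_coe_angle hw hv, Real.Angle.coe_sub]
    obtain ⟨k, hk⟩ := Real.Angle.angle_eq_iff_two_pi_dvd_sub.mp hangle
    have hk0 : k = 0 := by
      have habs : |(gB6 z / muB6 z).arg - (T - m)| < 2 * Real.pi := by
        have ha1 := abs_le.mp hqle
        have ha2 := abs_le.mp hTle
        have ha3 := abs_lt.mp hmlt
        rw [abs_lt]
        constructor <;> linarith
      rw [hk] at habs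
      have hk1 : |(k : ℝ)| < 1 := by
        rw [abs_mul, abs_of_pos (by linarith : (0:ℝ) < 2 * Real.pi)] at habs
        nlinarith [abs_nonneg (k:ℝ)]
      have hk2 : |k| < 1 := by
        have := hk1
        rw [← Int.cast_abs] at this
        exact_mod_cast this
      exact Int.abs_lt_one_iff.mp hk2
    have hTm : |T - m| ≤ Real.pi / 2 := by
      rw [hk0] at hk
      push_cast at hk
      have : (gB6 z / muB6 z).arg = T - m := by linarith
      rwa [← this]
    -- the interpolated angle
    have hcos : 0 ≤ Real.cos (α * T - m) := by
      have h1' := abs_le.mp hTm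
      have h2' := abs_lt.mp hmlt
      apply Real.cos_nonneg_of_mem_Icc
      rw [Set.mem_Icc]
      rcases le_or_gt 0 T with h | h
      · have ha : 0 ≤ α * T := mul_nonneg hα0.le h
        have hb : 0 ≤ (1 - α) * T := mul_nonneg (by linarith) h
        constructor <;> linarith
      · have ha : α * T ≤ 0 := mul_nonpos_of_nonneg_of_nonpos hα0.le h.le
        have hb : (1 - α) * T ≤ 0 := mul_nonpos_of_nonneg_of_nonpos (by linarith) h.le
        constructor <;> linarith
    -- compute the real part
    have h1 : (Complex.log (gB6 z) * (α : ℂ)).re = α * Real.log (‖(gB6 z)‖) := by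
      simp [Complex.mul_re, Complex.log_re, Complex.log_im]
      ring
    have h2 : (Complex.log (gB6 z) * (α : ℂ)).im = α * T := by
      simp [Complex.mul_im, Complex.log_re, Complex.log_im, ← hT]
      ring
    have hure : (Complex.exp (Complex.log (gB6 z) * (α : ℂ))).re
        = Real.exp (α * Real.log (‖(gB6 z)‖)) * Real.cos (α * T) := by
      rw [Complex.exp_re, h1, h2]
    have huim : (Complex.exp (Complex.log (gB6 z) * (α : ℂ))).im
        = Real.exp (α * Real.log (‖(gB6 z)‖)) * Real.sin (α * T) := by
      rw [Complex.exp_im, h1, h2]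
    have hvre' : (muB6 z).re = ‖(muB6 z)‖ * Real.cos m := by
      rw [hm, Complex.cos_arg hv]
      field_simp [norm_ne_zero_iff.mpr hv]
    have hvim' : (muB6 z).im = ‖(muB6 z)‖ * Real.sin m := by
      rw [hm, Complex.sin_arg]
      field_simp [norm_ne_zero_iff.mpr hv]
    rw [Complex.cpow_def_of_ne_zero hw, Complex.div_re, ← add_div]
    apply div_nonneg _ (Complex.normSq_nonneg _)
    rw [hure, huim, hvre', hvim']
    have heq : Real.exp (α * Real.log (‖(gB6 z)‖)) * Real.cos (α * T)
        * (‖(muB6 z)‖ * Real.cos m)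
        + Real.exp (α * Real.log (‖(gB6 z)‖)) * Real.sin (α * T)
        * (‖(muB6 z)‖ * Real.sin m)
        = Real.exp (α * Real.log (‖(gB6 z)‖)) * ‖(muB6 z)‖
          * Real.cos (α * T - m) := by
      rw [Real.cos_sub]
      ring
    rw [heq]
    positivity
end

section
/- For every real number x and every λ ∈ (0,1], one has 3/4 − λ cos x + (1/4) λ² cos(2x) ≥ (1/2)(1 − λ cos x)². In particular, the trigonometric polynomial 3/4 − λ cos x + (1/4) λ² cos(2x) is nonnegative for all x. -/
/-- Core inequality of the positivity property (P) in Lemma 3.1, case k = 5. -/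
theorem stmt_8 (x : ℝ) (l : ℝ) (hl : l ∈ Set.Ioc (0 : ℝ) 1) :
    (1 / 2) * (1 - l * Real.cos x) ^ 2 ≤
      3 / 4 - l * Real.cos x + (1 / 4) * l ^ 2 * Real.cos (2 * x) := by
  obtain ⟨h0, h1⟩ := hl
  rw [Real.cos_two_mul]
  nlinarith [sq_nonneg l, sq_nonneg (Real.cos x)]
end

section
/- For every real number x and every λ ∈ (0,1], one has 23/24 − (43/30) λ cos x + (2/3) λ² cos(2x) − (1/10) λ³ cos(3x) > 0. -/
/-- Core strict positivity of the positivity property (P) in Lemma 3.1, case k = 6. -/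
theorem stmt_9 (x : ℝ) (l : ℝ) (hl : l ∈ Set.Ioc (0 : ℝ) 1) :
    0 < 23 / 24 - (43 / 30) * l * Real.cos x + (2 / 3) * l ^ 2 * Real.cos (2 * x)
          - (1 / 10) * l ^ 3 * Real.cos (3 * x) := by
  obtain ⟨hl0, hl1⟩ := hl
  have hc1 : Real.cos x ≤ 1 := Real.cos_le_one x
  have hc2 : -1 ≤ Real.cos x := Real.neg_one_le_cos x
  rw [Real.cos_two_mul, Real.cos_three_mul]
  set c := Real.cos x with hc
  have ht1 : l * c ≤ 1 := by nlinarith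
  have ht2 : -1 ≤ l * c := by nlinarith
  have h1 : (0:ℝ) ≤ (2/5) * (l*c - 229/400)^2 * (1 - l*c) :=
    mul_nonneg (by positivity) (by linarith)
  have h2 : (0:ℝ) ≤ (713/1500) * (l*c - 21067/36800)^2 := by positivity
  have h3 : (0:ℝ) ≤ (1 - l^2) * (2/3 - (3/10) * (l*c)) :=
    mul_nonneg (by nlinarith) (by linarith)
  nlinarith [h1, h2, h3]
end

section
/- For every ξ ∈ [−1, 1], the polynomial p(ξ) = −(2/5)ξ³ + (4/3)ξ² − (17/15)ξ + 7/24 is strictly positive; indeed p attains its minimum on [−1,1] at ξ* = (20 − √94)/18 and p(ξ*) > 0.004785 > 0. -/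
/-- The cubic polynomial arising in the positivity proof for the six-step BDF
multipliers: it is strictly positive on [−1,1], attains its minimum there at
ξ* = (20 − √94)/18, and its minimal value exceeds 0.004785. -/
theorem stmt_10 :
    (∀ ξ ∈ Set.Icc (-1 : ℝ) 1,
        0 < -(2 / 5) * ξ ^ 3 + (4 / 3) * ξ ^ 2 - (17 / 15) * ξ + 7 / 24) ∧
    IsMinOn (fun ξ : ℝ => -(2 / 5) * ξ ^ 3 + (4 / 3) * ξ ^ 2 - (17 / 15) * ξ + 7 / 24)
      (Set.Icc (-1 : ℝ) 1) ((20 - Real.sqrt 94) / 18) ∧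
    (0.004785 : ℝ) <
      (fun ξ : ℝ => -(2 / 5) * ξ ^ 3 + (4 / 3) * ξ ^ 2 - (17 / 15) * ξ + 7 / 24)
        ((20 - Real.sqrt 94) / 18) := by
  set s := Real.sqrt 94 with hs
  have hs0 : (0:ℝ) ≤ s := Real.sqrt_nonneg 94
  have hs2 : s ^ 2 = 94 := Real.sq_sqrt (by norm_num)
  have hsu : s < 9.6954 := by nlinarith
  have hsl : (9.69 : ℝ) < s := by nlinarith
  have hmin : ∀ ξ ∈ Set.Icc (-1 : ℝ) 1,
      -(2 / 5) * ((20 - s)/18) ^ 3 + (4 / 3) * ((20 - s)/18) ^ 2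
        - (17 / 15) * ((20 - s)/18) + 7 / 24
      ≤ -(2 / 5) * ξ ^ 3 + (4 / 3) * ξ ^ 2 - (17 / 15) * ξ + 7 / 24 := by
    intro ξ hξ
    obtain ⟨h1, h2⟩ := hξ
    nlinarith [mul_nonneg (sq_nonneg (ξ - (20 - s)/18)) (by nlinarith : (0:ℝ) ≤ (10 + s)/9 - ξ)]
  have hval : (0.004785 : ℝ) <
      -(2 / 5) * ((20 - s)/18) ^ 3 + (4 / 3) * ((20 - s)/18) ^ 2
        - (17 / 15) * ((20 - s)/18) + 7 / 24 := by
    have : -(2 / 5) * ((20 - s)/18) ^ 3 + (4 / 3) * ((20 - s)/18) ^ 2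
        - (17 / 15) * ((20 - s)/18) + 7 / 24 = 757/5832 - (47/3645) * s := by
      field_simp
      nlinarith [hs2]
    rw [this]
    nlinarith
  refine ⟨fun ξ hξ => lt_trans (by norm_num) (lt_of_lt_of_le hval (hmin ξ hξ)), ?_, hval⟩
  intro ξ hξ
  simpa using hmin ξ hξ
end

section
/- For every y ∈ [−1, 1], the polynomial h(y) = −88y³ + 262y² − 230y + 65 is strictly positive; indeed h attains its minimum on [−1,1] at y* = (131 − √1981)/132 and h(y*) > 2.02 > 0. -/
/-- The cubic polynomial arising in the derivative estimate of Lemma 4.1 (BDF3):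
it is strictly positive on [−1,1], attains its minimum there at
y* = (131 − √1981)/132, and its minimal value exceeds 2.02. -/
theorem stmt_11 :
    (∀ y ∈ Set.Icc (-1 : ℝ) 1,
        0 < -88 * y ^ 3 + 262 * y ^ 2 - 230 * y + 65) ∧
    IsMinOn (fun y : ℝ => -88 * y ^ 3 + 262 * y ^ 2 - 230 * y + 65)
      (Set.Icc (-1 : ℝ) 1) ((131 - Real.sqrt 1981) / 132) ∧
    (2.02 : ℝ) <
      (fun y : ℝ => -88 * y ^ 3 + 262 * y ^ 2 - 230 * y + 65)
        ((131 - Real.sqrt 1981) / 132) := by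
  set s : ℝ := Real.sqrt 1981 with hs
  have hs0 : (0:ℝ) ≤ s := Real.sqrt_nonneg _
  have hs2 : s ^ 2 = 1981 := Real.sq_sqrt (by norm_num)
  have hslb : (44.5 : ℝ) < s := by nlinarith
  have hsub : s < (44.51 : ℝ) := by nlinarith
  set y₀ : ℝ := (131 - s) / 132 with hy₀
  -- value at the critical point
  have hval : -88 * y₀ ^ 3 + 262 * y₀ ^ 2 - 230 * y₀ + 65
      = (114641 - 1981 * s) / 13068 := by
    rw [hy₀]
    field_simp
    nlinarith [hs2]
  have hval_gt : (2.02 : ℝ) < -88 * y₀ ^ 3 + 262 * y₀ ^ 2 - 230 * y₀ + 65 := by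
    rw [hval]; nlinarith
  -- key factorization: h y - h y₀ = (y - y₀)^2 * (2 s - 88 (y - y₀))
  have hfac : ∀ y : ℝ, (-88 * y ^ 3 + 262 * y ^ 2 - 230 * y + 65)
      - (-88 * y₀ ^ 3 + 262 * y₀ ^ 2 - 230 * y₀ + 65)
      = (y - y₀) ^ 2 * (2 * s - 88 * (y - y₀)) := by
    intro y
    rw [hy₀]
    field_simp
    nlinarith [hs2, sq_nonneg (y - (131 - s)/132), congrArg (fun t => t * s) hs2, congrArg (fun t => t * y) hs2]
  have hmin : ∀ y ∈ Set.Icc (-1 : ℝ) 1,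
      -88 * y₀ ^ 3 + 262 * y₀ ^ 2 - 230 * y₀ + 65
        ≤ -88 * y ^ 3 + 262 * y ^ 2 - 230 * y + 65 := by
    intro y hy
    obtain ⟨hy1, hy2⟩ := hy
    have h1 : y - y₀ ≤ (1 + s) / 132 := by rw [hy₀]; linarith
    have h2 : 0 ≤ 2 * s - 88 * (y - y₀) := by nlinarith
    nlinarith [hfac y, sq_nonneg (y - y₀)]
  refine ⟨fun y hy => lt_of_lt_of_le (by linarith [hval_gt]) (hmin y hy), ?_, ?_⟩
  · intro y hy
    simp only [Set.mem_setOf_eq]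
    exact hmin y hy
  · exact hval_gt
end

section
/- For every x ∈ [0, π], one has (x − π)/2 + arctan( −(7 sin x − 2 sin(2x)) / (11 − 7 cos x + 2 cos(2x)) ) + arctan( ((1/2) sin x) / (1 − (1/2) cos x) ) ≥ −π/2. -/
set_option maxHeartbeats 1000000

open Real

/-- Key angle estimate in the proof of Lemma 4.1 (A-stability of BDF3). -/
theorem stmt_12 (x : ℝ) (hx : x ∈ Set.Icc 0 Real.pi) :
    -(Real.pi / 2) ≤
      (x - Real.pi) / 2
        + Real.arctan (-(7 * Real.sin x - 2 * Real.sin (2 * x)) /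
            (11 - 7 * Real.cos x + 2 * Real.cos (2 * x)))
        + Real.arctan ((1 / 2) * Real.sin x / (1 - (1 / 2) * Real.cos x)) := by
  obtain ⟨hx0, hxpi⟩ := hx
  -- Work with the half angle t = x/2
  set t := x / 2 with ht
  have ht0 : 0 ≤ t := by positivity
  have htlt : t ≤ π / 2 := by simp only [ht]; linarith
  set s := Real.sin t with hs
  set c := Real.cos t with hc
  have hs0 : 0 ≤ s := Real.sin_nonneg_of_nonneg_of_le_pi ht0 (by linarith [Real.pi_pos])
  have hc0 : 0 ≤ c := Real.cos_nonneg_of_mem_Icc ⟨by linarith [Real.pi_pos], htlt⟩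
  have hsc : s ^ 2 + c ^ 2 = 1 := Real.sin_sq_add_cos_sq t
  have hx2t : x = 2 * t := by rw [ht]; ring
  have hsinx : Real.sin x = 2 * s * c := by rw [hx2t, Real.sin_two_mul]
  have hcosx : Real.cos x = 1 - 2 * s ^ 2 := by rw [hx2t, Real.cos_two_mul]; nlinarith
  have hsin2x : Real.sin (2 * x) = 2 * (2 * s * c) * (1 - 2 * s ^ 2) := by
    rw [Real.sin_two_mul, hsinx, hcosx]
  have hcos2x : Real.cos (2 * x) = 1 - 2 * (2 * s * c) ^ 2 := by
    rw [Real.cos_two_mul, ← Real.sin_sq_add_cos_sq x, hsinx]; ring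
  rw [hsinx, hcosx, hsin2x, hcos2x]
  -- denominators
  have hD : (11 : ℝ) - 7 * (1 - 2 * s ^ 2) + 2 * (1 - 2 * (2 * s * c) ^ 2)
      = 6 - 2 * s ^ 2 + 16 * s ^ 4 := by nlinarith
  have hE : (1 : ℝ) - 1 / 2 * (1 - 2 * s ^ 2) = 1 / 2 + s ^ 2 := by ring
  have hNA : -(7 * (2 * s * c) - 2 * (2 * (2 * s * c) * (1 - 2 * s ^ 2)))
      = -(2 * s * c * (3 + 8 * s ^ 2)) := by ring
  rw [hD, hE, hNA]
  have hs1 : s ≤ 1 := by nlinarith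
  have hDpos : (0 : ℝ) < 6 - 2 * s ^ 2 + 16 * s ^ 4 := by nlinarith
  have hEpos : (0 : ℝ) < 1 / 2 + s ^ 2 := by positivity
  set A : ℝ := -(2 * s * c * (3 + 8 * s ^ 2)) / (6 - 2 * s ^ 2 + 16 * s ^ 4) with hA
  set B : ℝ := 1 / 2 * (2 * s * c) / (1 / 2 + s ^ 2) with hB
  have hAle : A ≤ 0 := by
    apply div_nonpos_of_nonpos_of_nonneg _ hDpos.le
    nlinarith [mul_nonneg hs0 hc0, mul_nonneg (mul_nonneg hs0 hc0) (sq_nonneg s)]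
  have hBge : 0 ≤ B := by
    apply div_nonneg _ hEpos.le
    positivity
  have hAB : A * B < 1 := lt_of_le_of_lt (mul_nonpos_of_nonpos_of_nonneg hAle hBge) one_pos
  rw [add_assoc, Real.arctan_add hAB]
  -- goal: -(π/2) ≤ (x-π)/2 + arctan ((A+B)/(1-A*B))
  set W : ℝ := (A + B) / (1 - A * B) with hW
  have key : Real.arctan (-W) ≤ t := by
    rcases eq_or_lt_of_le htlt with h | h
    · exact le_of_lt (h ▸ Real.arctan_lt_pi_div_two _)
    · rw [← Real.arctan_tan (x := t) (by linarith [Real.pi_pos]) h]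
      apply Real.arctan_strictMono.monotone
      rw [Real.tan_eq_sin_div_cos, ← hs, ← hc]
      have hcpos : 0 < c := Real.cos_pos_of_mem_Ioo ⟨by linarith [Real.pi_pos], h⟩
      have h1AB : 0 < 1 - A * B := by linarith
      rw [hW, ← neg_div, div_le_div_iff₀ h1AB hcpos]
      have hnum : (0:ℝ) ≤ 12 - 16 * s ^ 2 + 64 * s ^ 4 := by nlinarith [sq_nonneg (8 * s ^ 2 - 1)]
      have hid : s * (1 - A * B) - -(A + B) * c
          = s * (12 - 16 * s ^ 2 + 64 * s ^ 4)
            / (2 * ((6 - 2 * s ^ 2 + 16 * s ^ 4) * (1 / 2 + s ^ 2))) := by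
        rw [hA, hB]
        have h1' : (6 - s ^ 2 * 2 + s ^ 4 * 16 : ℝ) ≠ 0 := by nlinarith
        field_simp [hDpos.ne', hEpos.ne', h1']
        ring_nf
        linear_combination (6 * s - 20 * s ^ 3 + 32 * s ^ 5) * hsc
      have hfrac : (0:ℝ) ≤ s * (12 - 16 * s ^ 2 + 64 * s ^ 4)
          / (2 * ((6 - 2 * s ^ 2 + 16 * s ^ 4) * (1 / 2 + s ^ 2))) := by
        apply div_nonneg (mul_nonneg hs0 hnum) (by positivity)
      linarith
  have := Real.arctan_neg W
  have : -Real.arctan W ≤ t := by rw [← Real.arctan_neg]; exact key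
  have hπ := Real.pi_pos
  linarith [this]
end

section
/- For every x ∈ [0, π], one has (x − π)/2 + arctan( −(23 sin x − 13 sin(2x) + 3 sin(3x)) / (25 − 23 cos x + 13 cos(2x) − 3 cos(3x)) ) + arctan( ((1/2) sin x) / (1 − (1/2) cos x) ) ≥ −π/2. -/
set_option maxHeartbeats 1200000 in
/-- Key angle estimate in the proof of Lemma 4.2 (A-stability of BDF4). -/
theorem stmt_13 (x : ℝ) (hx : x ∈ Set.Icc 0 Real.pi) :
    -(Real.pi / 2) ≤
      (x - Real.pi) / 2
        + Real.arctan (-(23 * Real.sin x - 13 * Real.sin (2 * x) + 3 * Real.sin (3 * x)) /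
            (25 - 23 * Real.cos x + 13 * Real.cos (2 * x) - 3 * Real.cos (3 * x)))
        + Real.arctan ((1 / 2) * Real.sin x / (1 - (1 / 2) * Real.cos x)) := by
  obtain ⟨hx0, hxpi⟩ := hx
  have hpi := Real.pi_pos
  set s := Real.sin (x/2) with hs
  set c := Real.cos (x/2) with hc
  have hpyth : s^2 + c^2 = 1 := Real.sin_sq_add_cos_sq _
  have hs0 : 0 ≤ s := Real.sin_nonneg_of_nonneg_of_le_pi (by linarith) (by linarith)
  have hc0 : 0 ≤ c := Real.cos_nonneg_of_mem_Icc ⟨by linarith, by linarith⟩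
  have hsx : Real.sin x = 2*s*c := by
    have h := Real.sin_two_mul (x/2)
    rw [show 2*(x/2) = x by ring] at h
    exact h
  have hcx : Real.cos x = 1 - 2*s^2 := by
    have h := Real.cos_two_mul (x/2)
    rw [show 2*(x/2) = x by ring] at h
    rw [h, ← hc]; nlinarith [hpyth]
  have hs2 : Real.sin (2*x) = 2*Real.sin x*Real.cos x := Real.sin_two_mul x
  have hc2 : Real.cos (2*x) = 2*Real.cos x^2 - 1 := Real.cos_two_mul x
  have hs3 : Real.sin (3*x) = Real.sin (2*x)*Real.cos x + Real.cos (2*x)*Real.sin x := by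
    rw [show (3:ℝ)*x = 2*x + x by ring, Real.sin_add]
  have hc3 : Real.cos (3*x) = Real.cos (2*x)*Real.cos x - Real.sin (2*x)*Real.sin x := by
    rw [show (3:ℝ)*x = 2*x + x by ring, Real.cos_add]
  -- abbreviations
  set N := -(23 * Real.sin x - 13 * Real.sin (2 * x) + 3 * Real.sin (3 * x)) with hN
  set D := 25 - 23 * Real.cos x + 13 * Real.cos (2 * x) - 3 * Real.cos (3 * x) with hD
  set p := 1 - (1/2) * Real.cos x with hp
  have hppos : 0 < p := by
    rw [hp]; nlinarith [Real.cos_le_one x]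
  have hDpos : 0 < D := by
    have hDred : D = 12 - 4*s^2 - 40*s^4 + 96*s^6 := by
      rw [hD, hc3, hc2, hs2, hsx, hcx]
      linear_combination ((24:ℝ)*s^2 + (-48:ℝ)*s^4) * hpyth
    rw [hDred]
    nlinarith [sq_nonneg (1/2 - 2*s^2), mul_nonneg (sq_nonneg s) (sq_nonneg (1 - 2*s^2))]
  set r := (1/2) * Real.sin x / p with hr
  have hsinx0 : 0 ≤ Real.sin x := Real.sin_nonneg_of_nonneg_of_le_pi hx0 hxpi
  have hr0 : 0 ≤ r := by
    rw [hr]; exact div_nonneg (by linarith) hppos.le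
  have hth3 : 0 ≤ Real.arctan r := by
    rw [← Real.arctan_zero]
    exact Real.arctan_strictMono.monotone hr0
  have hth3lt : Real.arctan r < Real.pi/2 := Real.arctan_lt_pi_div_two r
  -- reduce goal
  rw [show (x - Real.pi)/2 + Real.arctan (N/D) + Real.arctan r
      = (x/2 + Real.arctan (N/D) + Real.arctan r) - Real.pi/2 by ring]
  rw [show -(Real.pi/2) = 0 - Real.pi/2 by ring]
  apply sub_le_sub_right
  by_cases hcase : Real.pi/2 ≤ x/2 + Real.arctan r
  · linarith [Real.neg_pi_div_two_lt_arctan (N/D)]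
  · push_neg at hcase
    set A := x/2 + Real.arctan r with hA
    have hA0 : 0 ≤ A := by positivity
    have hcA : 0 < Real.cos A := Real.cos_pos_of_mem_Ioo ⟨by linarith, hcase⟩
    -- key polynomial inequality
    have key : 0 ≤ N*(c*p - s*((1/2)*Real.sin x)) + D*(s*p + c*((1/2)*Real.sin x)) := by
      have hred : N*(c*p - s*((1/2)*Real.sin x)) + D*(s*p + c*((1/2)*Real.sin x))
          = 12*s - 4*s^3 - 104*s^5 + 192*s^7 := by
        rw [hN, hD, hp, hs3, hc3, hs2, hc2, hsx, hcx]
        linear_combination ((6:ℝ)*s + (4:ℝ)*s^3 + (24:ℝ)*s^3*c^2 + (-88:ℝ)*s^5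
          + (-48:ℝ)*s^5*c^2 + (48:ℝ)*s^7) * hpyth
      rw [hred]
      have hs2le : s^2 ≤ 1 := by nlinarith [sq_nonneg c]
      have a1 : 0 ≤ s^3*(s^2 - 2/5)^2 := mul_nonneg (pow_nonneg hs0 3) (sq_nonneg _)
      have a2 : 0 ≤ (s*(1 - s^2))*(s^2 - 2/5)^2 :=
        mul_nonneg (mul_nonneg hs0 (by linarith)) (sq_nonneg _)
      have a3 : 0 ≤ s^3 := pow_nonneg hs0 3
      have a4 : 0 ≤ s*(1 - s^2) := mul_nonneg hs0 (by linarith)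
      nlinarith [a1, a2, a3, a4]
    -- main inequality
    have hmain : 0 ≤ N*(c - s*r) + D*(s + c*r) := by
      have heq : N*(c - s*r) + D*(s + c*r)
          = (N*(c*p - s*((1/2)*Real.sin x)) + D*(s*p + c*((1/2)*Real.sin x))) / p := by
        rw [hr]; field_simp
      rw [heq]
      exact div_nonneg key hppos.le
    have htan : Real.tan (-A) ≤ N/D := by
      rw [Real.tan_neg, Real.tan_eq_sin_div_cos]
      have hsinA : Real.sin A = (s + c*r) / Real.sqrt (1 + r^2) := by
        rw [hA, Real.sin_add, Real.sin_arctan, Real.cos_arctan, ← hs, ← hc]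
        field_simp
      have hcosA : Real.cos A = (c - s*r) / Real.sqrt (1 + r^2) := by
        rw [hA, Real.cos_add, Real.sin_arctan, Real.cos_arctan, ← hs, ← hc]
        field_simp
      have hq : 0 < Real.sqrt (1 + r^2) := Real.sqrt_pos.mpr (by positivity)
      rw [show -(Real.sin A / Real.cos A) = (-Real.sin A) / Real.cos A by ring]
      rw [div_le_div_iff₀ hcA hDpos, hsinA, hcosA]
      rw [show -((s + c*r) / Real.sqrt (1 + r^2)) * D
          = (-((s + c*r)*D)) / Real.sqrt (1 + r^2) by ring]
      rw [show N * ((c - s*r) / Real.sqrt (1 + r^2))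
          = (N*(c - s*r)) / Real.sqrt (1 + r^2) by ring]
      rw [div_le_div_iff_of_pos_right hq]
      nlinarith [hmain]
    have harc : Real.arctan (Real.tan (-A)) = -A :=
      Real.arctan_tan (by linarith) (by linarith)
    have hmono := Real.arctan_strictMono.monotone htan
    rw [harc] at hmono
    linarith
end

section
/- For every x ∈ [0, π], one has (x − π)/2 + arctan( −(163 sin x − 137 sin(2x) + 63 sin(3x) − 12 sin(4x)) / (137 − 163 cos x + 137 cos(2x) − 63 cos(3x) + 12 cos(4x)) ) + 2 arctan( ((1/2) sin x) / (1 − (1/2) cos x) ) ≥ −π/2. -/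
open Real

set_option maxHeartbeats 1000000 in
/-- Key angle estimate in the proof of Lemma 4.3 (A-stability of BDF5). -/
theorem stmt_14 (x : ℝ) (hx : x ∈ Set.Icc 0 Real.pi) :
    -(Real.pi / 2) ≤
      (x - Real.pi) / 2
        + Real.arctan (-(163 * Real.sin x - 137 * Real.sin (2 * x) + 63 * Real.sin (3 * x)
              - 12 * Real.sin (4 * x)) /
            (137 - 163 * Real.cos x + 137 * Real.cos (2 * x) - 63 * Real.cos (3 * x)
              + 12 * Real.cos (4 * x)))
        + 2 * Real.arctan ((1 / 2) * Real.sin x / (1 - (1 / 2) * Real.cos x)) := by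
  obtain ⟨hx0, hxpi⟩ := hx
  rcases eq_or_lt_of_le hx0 with h0 | h0
  · rw [← h0]
    norm_num
    linarith [Real.pi_pos]
  rcases eq_or_lt_of_le hxpi with hpi | hpi
  · rw [hpi]
    have s2 : Real.sin (2 * Real.pi) = 0 := Real.sin_two_pi
    have s3 : Real.sin (3 * Real.pi) = 0 := by
      rw [show (3 : ℝ) * Real.pi = Real.pi + 2 * Real.pi by ring, Real.sin_add_two_pi,
        Real.sin_pi]
    have s4 : Real.sin (4 * Real.pi) = 0 := by
      rw [show (4 : ℝ) * Real.pi = 2 * Real.pi + 2 * Real.pi by ring, Real.sin_add_two_pi,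
        Real.sin_two_pi]
    rw [Real.sin_pi, s2, s3, s4]
    norm_num
    linarith [Real.pi_pos]
  -- main case : 0 < x < π
  have hs : 0 < Real.sin x := Real.sin_pos_of_pos_of_lt_pi h0 hpi
  have hpy : Real.sin x ^ 2 + Real.cos x ^ 2 = 1 := Real.sin_sq_add_cos_sq x
  have hc1 : -1 < Real.cos x := by nlinarith
  have hc2 : Real.cos x < 1 := by nlinarith
  have e2s : Real.sin (2 * x) = 2 * Real.sin x * Real.cos x := Real.sin_two_mul x
  have e2c : Real.cos (2 * x) = 2 * Real.cos x ^ 2 - 1 := Real.cos_two_mul x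
  have e3s : Real.sin (3 * x) = Real.sin x * (4 * Real.cos x ^ 2 - 1) := by
    rw [show (3 : ℝ) * x = 2 * x + x by ring, Real.sin_add, e2s, e2c]; ring
  have e3c : Real.cos (3 * x) = 4 * Real.cos x ^ 3 - 3 * Real.cos x := by
    rw [show (3 : ℝ) * x = 2 * x + x by ring, Real.cos_add, e2s, e2c]
    linear_combination (-2 * Real.cos x) * hpy
  have e4s : Real.sin (4 * x) = 4 * Real.sin x * Real.cos x * (2 * Real.cos x ^ 2 - 1) := by
    rw [show (4 : ℝ) * x = 2 * (2 * x) by ring, Real.sin_two_mul, e2s, e2c]; ring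
  have e4c : Real.cos (4 * x) = 8 * Real.cos x ^ 4 - 8 * Real.cos x ^ 2 + 1 := by
    rw [show (4 : ℝ) * x = 2 * (2 * x) by ring, Real.cos_two_mul, e2c]; ring
  rw [e2s, e2c, e3s, e3c, e4s, e4c]
  set s := Real.sin x with hsdef
  set c := Real.cos x with hcdef
  have hnum : -(163 * s - 137 * (2 * s * c) + 63 * (s * (4 * c ^ 2 - 1))
      - 12 * (4 * s * c * (2 * c ^ 2 - 1)))
      = s * (-100 + 226 * c - 252 * c ^ 2 + 96 * c ^ 3) := by ring
  have hden : 137 - 163 * c + 137 * (2 * c ^ 2 - 1) - 63 * (4 * c ^ 3 - 3 * c)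
      + 12 * (8 * c ^ 4 - 8 * c ^ 2 + 1)
      = 96 * c ^ 4 - 252 * c ^ 3 + 178 * c ^ 2 + 26 * c + 12 := by ring
  rw [hnum, hden]
  have h1c : (0:ℝ) < 1 + c := by linarith
  have h2c : (0:ℝ) < 2 - c := by linarith
  have hK : (0:ℝ) < 2 * c ^ 2 - 4 * c + 3 := by nlinarith [sq_nonneg (c - 1)]
  have hD : (0:ℝ) < 96 * c ^ 4 - 252 * c ^ 3 + 178 * c ^ 2 + 26 * c + 12 := by
    nlinarith [sq_nonneg (c - 1), sq_nonneg (c + 1), sq_nonneg c, sq_nonneg (c ^ 2 - c),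
      sq_nonneg (c ^ 2 - 2 * c), mul_pos h1c h2c]
  have hQ : (0:ℝ) < 768 * c ^ 4 - 2016 * c ^ 3 + 1472 * c ^ 2 - 168 * c + 184 := by
    nlinarith [sq_nonneg (c - 1), sq_nonneg (c + 1), sq_nonneg c, sq_nonneg (c ^ 2 - c),
      sq_nonneg (c ^ 2 - 2 * c), mul_pos h1c h2c]
  -- rewrite the last arctan argument
  have hu2 : (1:ℝ) / 2 * s / (1 - 1 / 2 * c) = s / (2 - c) := by
    rw [div_eq_div_iff (by linarith) h2c.ne']; ring
  rw [hu2]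
  -- u bounds
  have hu0 : 0 < s / (2 - c) := div_pos hs h2c
  have hu1 : s / (2 - c) < 1 := by
    rw [div_lt_one h2c]
    nlinarith [Real.sin_le_one x]
  -- doubling formula : 2 arctan u = arctan v
  have hs2 : s ^ 2 = 1 - c ^ 2 := by linarith
  have hpos1 : 0 < 1 - (s / (2 - c)) ^ 2 := by nlinarith [hu0, hu1]
  have hv : 2 * Real.arctan (s / (2 - c))
      = Real.arctan (2 * s * (2 - c) / (2 * c ^ 2 - 4 * c + 3)) := by
    rw [Real.two_mul_arctan (by linarith) hu1]
    congr 1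
    rw [div_eq_div_iff hpos1.ne' hK.ne', div_pow, hs2]
    field_simp
    ring
  -- half-angle : arctan (s/(1+c)) = x/2
  have hcoshalf : 0 < Real.cos (x / 2) := by
    apply Real.cos_pos_of_mem_Ioo
    constructor <;> [linarith [Real.pi_pos]; linarith]
  have hsinmul : s = 2 * Real.sin (x / 2) * Real.cos (x / 2) := by
    have := Real.sin_two_mul (x / 2)
    rw [show 2 * (x / 2) = x by ring] at this
    rw [hsdef, this]
  have hcosmul : c = 2 * Real.cos (x / 2) ^ 2 - 1 := by
    have := Real.cos_two_mul (x / 2)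
    rw [show 2 * (x / 2) = x by ring] at this
    rw [hcdef, this]
  have htan : Real.tan (x / 2) = s / (1 + c) := by
    rw [Real.tan_eq_sin_div_cos, hsinmul, hcosmul]
    rw [div_eq_div_iff hcoshalf.ne' (by nlinarith)]
    ring
  have hhalf : Real.arctan (s / (1 + c)) = x / 2 := by
    rw [← htan, Real.arctan_tan (by linarith [Real.pi_pos]) (by linarith)]
  clear hsdef hcdef e2s e2c e3s e3c e4s e4c hnum hden hu2 htan hsinmul hcosmul hcoshalf
  clear_value s c
  rcases le_or_gt c (1 / 2) with hcase | hcase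
  · -- here arctan t + arctan v ≥ π/2
    have ht0 : 0 < s / (1 + c) := div_pos hs h1c
    have hprod : 1 ≤ s / (1 + c) * (2 * s * (2 - c) / (2 * c ^ 2 - 4 * c + 3)) := by
      rw [div_mul_div_comm, le_div_iff₀ (by positivity)]
      nlinarith [hpy]
    have hinv : (s / (1 + c))⁻¹ ≤ 2 * s * (2 - c) / (2 * c ^ 2 - 4 * c + 3) := by
      rw [inv_eq_one_div, div_le_iff₀ ht0]
      nlinarith [hprod]
    have harct : Real.pi / 2 - Real.arctan (s / (1 + c))
        ≤ Real.arctan (2 * s * (2 - c) / (2 * c ^ 2 - 4 * c + 3)) := by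
      rw [← Real.arctan_inv_of_pos ht0]
      exact Real.arctan_strictMono.monotone hinv
    have hlb := Real.neg_pi_div_two_lt_arctan
      (s * (-100 + 226 * c - 252 * c ^ 2 + 96 * c ^ 3)
        / (96 * c ^ 4 - 252 * c ^ 3 + 178 * c ^ 2 + 26 * c + 12))
    linarith [hhalf, hv, harct, hlb]
  · -- here c > 1/2, use arctan addition on the negatives
    have hden1 : (0:ℝ) < (1 + c) * (2 * c - 1) := by nlinarith
    have hmul : (-(s / (1 + c))) * (-(2 * s * (2 - c) / (2 * c ^ 2 - 4 * c + 3))) < 1 := by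
      rw [neg_mul_neg, div_mul_div_comm, div_lt_one (by positivity)]
      nlinarith [hpy]
    have hadd := Real.arctan_add hmul
    rw [Real.arctan_neg, Real.arctan_neg] at hadd
    have hA : -(s / (1 + c)) + -(2 * s * (2 - c) / (2 * c ^ 2 - 4 * c + 3))
        = -(s * (7 - 2 * c)) / ((1 + c) * (2 * c ^ 2 - 4 * c + 3)) := by
      rw [← neg_div, ← neg_div, div_add_div _ _ h1c.ne' hK.ne',
        div_eq_div_iff (by positivity) (by positivity)]
      ring
    have hB : 1 - -(s / (1 + c)) * -(2 * s * (2 - c) / (2 * c ^ 2 - 4 * c + 3))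
        = (1 + c) * (2 * c - 1) / ((1 + c) * (2 * c ^ 2 - 4 * c + 3)) := by
      rw [neg_mul_neg, div_mul_div_comm, one_sub_div (by positivity),
        div_eq_div_iff (by positivity) (by positivity)]
      linear_combination (-2 * (2 - c) * ((1 + c) * (2 * c ^ 2 - 4 * c + 3))) * hpy
    have hC : (-(s / (1 + c)) + -(2 * s * (2 - c) / (2 * c ^ 2 - 4 * c + 3)))
          / (1 - -(s / (1 + c)) * -(2 * s * (2 - c) / (2 * c ^ 2 - 4 * c + 3)))
        = -(s * (7 - 2 * c)) / ((1 + c) * (2 * c - 1)) := by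
      have hBpos : (0:ℝ) < (1 + c) * (2 * c - 1) / ((1 + c) * (2 * c ^ 2 - 4 * c + 3)) :=
        div_pos hden1 (by positivity)
      rw [hA, hB, div_eq_div_iff hBpos.ne' hden1.ne', div_mul_eq_mul_div, mul_div_assoc]
    rw [hC] at hadd
    have hineq : -(s * (7 - 2 * c)) / ((1 + c) * (2 * c - 1))
        ≤ s * (-100 + 226 * c - 252 * c ^ 2 + 96 * c ^ 3)
          / (96 * c ^ 4 - 252 * c ^ 3 + 178 * c ^ 2 + 26 * c + 12) := by
      rw [div_le_div_iff₀ hden1 hD]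
      nlinarith [mul_nonneg hs.le hQ.le]
    have hmono := Real.arctan_strictMono.monotone hineq
    rw [← hadd] at hmono
    linarith [hhalf, hv, hmono]
end

section
/- For every real number x, one has arctan( (3 sin x) / (5 − 3 cos x) ) + arctan( (sin x) / (2 − cos x) ) + arctan( (sin x) / (3 − cos x) ) < π/2. -/
open Real

/-- Strict upper bound on θ₃ + θ₄ + θ₅ in the proof of Lemma 4.4 (A-stability of BDF6). -/
theorem stmt_15 (x : ℝ) :
    Real.arctan (3 * Real.sin x / (5 - 3 * Real.cos x))
      + Real.arctan (Real.sin x / (2 - Real.cos x))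
      + Real.arctan (Real.sin x / (3 - Real.cos x)) < Real.pi / 2 := by
  have hc := Real.cos_le_one x
  have hc' := Real.neg_one_le_cos x
  have hsc := Real.sin_sq_add_cos_sq x
  set s := Real.sin x
  set c := Real.cos x
  have ha : Real.sqrt 2 ^ 2 = 2 := Real.sq_sqrt (by norm_num)
  have hb : Real.sqrt 3 ^ 2 = 3 := Real.sq_sqrt (by norm_num)
  have ha0 : (0:ℝ) ≤ Real.sqrt 2 := Real.sqrt_nonneg 2
  have hb0 : (0:ℝ) ≤ Real.sqrt 3 := Real.sqrt_nonneg 3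
  have ha1 : Real.sqrt 2 < 1.42 := by nlinarith
  have hb1 : Real.sqrt 3 < 1.74 := by nlinarith
  have ha2 : (1.41:ℝ) < Real.sqrt 2 := by nlinarith
  have hb2 : (1.73:ℝ) < Real.sqrt 3 := by nlinarith
  -- bound each term by its maximum
  have h1 : 3 * s / (5 - 3 * c) ≤ 3 / 4 := by
    rw [div_le_iff₀ (by nlinarith)]
    nlinarith [sq_nonneg (3 * s - 4 * c)]
  have h2 : s / (2 - c) ≤ Real.sqrt 3 / 3 := by
    rw [div_le_div_iff₀ (by nlinarith) (by norm_num)]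
    nlinarith [sq_nonneg (s - Real.sqrt 3 * c)]
  have h3 : s / (3 - c) ≤ Real.sqrt 2 / 4 := by
    rw [div_le_div_iff₀ (by nlinarith) (by norm_num)]
    nlinarith [sq_nonneg (s - 2 * Real.sqrt 2 * c)]
  have m := Real.arctan_strictMono.monotone
  have key : Real.arctan (3/4) + Real.arctan (Real.sqrt 3 / 3)
      + Real.arctan (Real.sqrt 2 / 4) < Real.pi / 2 := by
    have hmul : (3/4 : ℝ) * (Real.sqrt 3 / 3) < 1 := by nlinarith
    rw [Real.arctan_add hmul]
    apply Real.arctan_add_arctan_lt_pi_div_two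
    rw [div_mul_eq_mul_div, div_lt_one (by nlinarith)]
    nlinarith
  calc Real.arctan (3 * s / (5 - 3 * c)) + Real.arctan (s / (2 - c))
        + Real.arctan (s / (3 - c))
      ≤ Real.arctan (3/4) + Real.arctan (Real.sqrt 3 / 3)
        + Real.arctan (Real.sqrt 2 / 4) := by
        gcongr
    _ < Real.pi / 2 := key
end

section
/- For every x ∈ [0, π], one has 23 sin x − 13 sin(2x) + 3 sin(3x) ≥ 0. -/
/-- Nonnegativity of b₄ on [0, π], used in the proof of Lemma 4.2 (BDF4). -/
theorem stmt_17 (x : ℝ) (hx : x ∈ Set.Icc 0 Real.pi) :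
    0 ≤ 23 * Real.sin x - 13 * Real.sin (2 * x) + 3 * Real.sin (3 * x) := by
  obtain ⟨h0, h1⟩ := hx
  have hs : 0 ≤ Real.sin x := Real.sin_nonneg_of_nonneg_of_le_pi h0 h1
  have hc : -1 ≤ Real.cos x := Real.neg_one_le_cos x
  have hc' : Real.cos x ≤ 1 := Real.cos_le_one x
  have hpy : Real.sin x ^ 2 + Real.cos x ^ 2 = 1 := Real.sin_sq_add_cos_sq x
  rw [Real.sin_two_mul, Real.sin_three_mul]
  nlinarith [sq_nonneg (Real.cos x - 13/12), mul_nonneg hs (sq_nonneg (Real.cos x - 13/12))]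
end

section
/- For every x ∈ [0, π], one has 163 sin x − 137 sin(2x) + 63 sin(3x) − 12 sin(4x) ≥ 0. -/
/-- Nonnegativity of b₅ on [0, π], used in the proof of Lemma 4.3 (BDF5). -/
theorem stmt_18 (x : ℝ) (hx : x ∈ Set.Icc 0 Real.pi) :
    0 ≤ 163 * Real.sin x - 137 * Real.sin (2 * x) + 63 * Real.sin (3 * x)
          - 12 * Real.sin (4 * x) := by
  obtain ⟨h0, hπ⟩ := hx
  have hs : 0 ≤ Real.sin x := Real.sin_nonneg_of_nonneg_of_le_pi h0 hπ
  have hc : Real.cos x ≤ 1 := Real.cos_le_one x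
  have h4 : (4:ℝ) * x = 2 * (2 * x) := by ring
  rw [h4, Real.sin_two_mul (2 * x), Real.sin_two_mul, Real.cos_two_mul,
    Real.sin_three_mul]
  have hp := Real.sin_sq_add_cos_sq x
  nlinarith [mul_nonneg hs (mul_nonneg (sub_nonneg.mpr hc)
      (by nlinarith [sq_nonneg (Real.cos x - 1)] :
        (0:ℝ) ≤ 96 * Real.cos x ^ 2 - 156 * Real.cos x + 70)),
    hs, sq_nonneg (Real.cos x), hp]
end

section
/- For every x ∈ [0, π], one has 213 sin x − 237 sin(2x) + 163 sin(3x) − 62 sin(4x) + 10 sin(5x) ≥ 0. -/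
/-- Nonnegativity of b₆ on [0, π], used in the proof of Lemma 4.4 (BDF6). -/
theorem stmt_19 (x : ℝ) (hx : x ∈ Set.Icc 0 Real.pi) :
    0 ≤ 213 * Real.sin x - 237 * Real.sin (2 * x) + 163 * Real.sin (3 * x)
          - 62 * Real.sin (4 * x) + 10 * Real.sin (5 * x) := by
  obtain ⟨h0, h1⟩ := hx
  have hs : 0 ≤ Real.sin x := Real.sin_nonneg_of_nonneg_of_le_pi h0 h1
  have hc1 : -1 ≤ Real.cos x := Real.neg_one_le_cos x
  have hc2 : Real.cos x ≤ 1 := Real.cos_le_one x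
  have hpy : Real.sin x ^ 2 + Real.cos x ^ 2 = 1 := Real.sin_sq_add_cos_sq x
  set s := Real.sin x with hsdef
  set c := Real.cos x with hcdef
  have h2 : Real.sin (2 * x) = 2 * s * c := Real.sin_two_mul x
  have h3 : Real.sin (3 * x) = s * (4 * c ^ 2 - 1) := by
    have e : (3:ℝ) * x = 2 * x + x := by ring
    rw [e, Real.sin_add, Real.sin_two_mul, Real.cos_two_mul, ← hsdef, ← hcdef]; ring
  have h4 : Real.sin (4 * x) = s * (8 * c ^ 3 - 4 * c) := by
    have e : (4:ℝ) * x = 2 * x + 2 * x := by ring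
    rw [e, Real.sin_add, Real.sin_two_mul, Real.cos_two_mul, ← hsdef, ← hcdef]; ring
  have h5 : Real.sin (5 * x) = s * (16 * c ^ 4 - 12 * c ^ 2 + 1) := by
    have e : (5:ℝ) * x = 2 * x + (2 * x + x) := by ring
    rw [e, Real.sin_add, Real.sin_add, Real.cos_add, Real.sin_two_mul, Real.cos_two_mul,
      ← hsdef, ← hcdef]
    linear_combination (-4 * s * c ^ 2) * hpy
  rw [h2, h3, h4, h5]
  have hP : 0 ≤ 160 * c ^ 4 - 496 * c ^ 3 + 532 * c ^ 2 - 226 * c + 60 := by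
    nlinarith [sq_nonneg (c - 1), sq_nonneg (c * c - c), sq_nonneg c,
      sq_nonneg (c * (c - 1)), sq_nonneg (2 * c - 1), sq_nonneg (c ^ 2 - 2 * c),
      mul_nonneg (sub_nonneg.2 hc2) (sq_nonneg c)]
  nlinarith [mul_nonneg hs hP]
end
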